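/- arXiv:1111.2893 — 12 statements merged into one kernel-verified Lean document; each statement's English description precedes it below -/
import Mathlib

section
/- For every integer n ≥ 2 and every nonnegative, nondecreasing integrable function g : [0,1] → ℝ, the integral ∫_0^1 g(t)·t^{n-1}·(2·t^{n-1} − 1) dt is nonnegative. -/
open MeasureTheory intervalIntegral

/-- For every integer `n ≥ 2` and every nonnegative, nondecreasing integrable
function `g : [0,1] → ℝ`, the integral `∫ t in 0..1, g t * t^(n-1) * (2 * t^(n-1) - 1)`
is nonnegative. -/
theorem integral_monotone_weight_nonneg
    (n : ℕ) (hn : 2 ≤ n) (g : ℝ → ℝ)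
    (hg_nonneg : ∀ t ∈ Set.Icc (0 : ℝ) 1, 0 ≤ g t)
    (hg_mono : MonotoneOn g (Set.Icc (0 : ℝ) 1))
    (hg_int : IntervalIntegrable g MeasureTheory.volume 0 1) :
    0 ≤ ∫ t in (0:ℝ)..1, g t * (t ^ (n - 1) * (2 * t ^ (n - 1) - 1)) := by
  set m := n - 1 with hmdef
  have hmne : m ≠ 0 := by omega
  set c : ℝ := (1/2 : ℝ) ^ ((m : ℝ)⁻¹) with hcdef
  have hc0 : 0 ≤ c := Real.rpow_nonneg (by norm_num) _
  have hc1 : c ≤ 1 := Real.rpow_le_one (by norm_num) (by norm_num) (by positivity)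
  have hcm : c ^ m = 1/2 := Real.rpow_inv_natCast_pow (by norm_num) hmne
  set w : ℝ → ℝ := fun t => t ^ m * (2 * t ^ m - 1) with hwdef
  have hw_cont : Continuous w := by fun_prop
  have hgw_int : IntervalIntegrable (fun t => g t * w t) volume 0 1 :=
    hg_int.mul_continuousOn hw_cont.continuousOn
  have hsub1 : Set.uIcc (0:ℝ) c ⊆ Set.uIcc (0:ℝ) 1 :=
    Set.uIcc_subset_uIcc (by simp) (by rw [Set.uIcc_of_le (by norm_num)]; exact ⟨hc0, hc1⟩)
  have hsub2 : Set.uIcc c (1:ℝ) ⊆ Set.uIcc (0:ℝ) 1 :=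
    Set.uIcc_subset_uIcc (by rw [Set.uIcc_of_le (by norm_num)]; exact ⟨hc0, hc1⟩) (by simp)
  have int1 : IntervalIntegrable (fun t => g t * w t) volume 0 c := hgw_int.mono_set hsub1
  have int2 : IntervalIntegrable (fun t => g t * w t) volume c 1 := hgw_int.mono_set hsub2
  have intc1 : IntervalIntegrable (fun t => g c * w t) volume 0 c :=
    (Continuous.intervalIntegrable (by fun_prop) _ _)
  have intc2 : IntervalIntegrable (fun t => g c * w t) volume c 1 :=
    (Continuous.intervalIntegrable (by fun_prop) _ _)
  have hgc_mem : c ∈ Set.Icc (0:ℝ) 1 := ⟨hc0, hc1⟩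
  have h1 : ∫ t in (0:ℝ)..c, g c * w t ≤ ∫ t in (0:ℝ)..c, g t * w t := by
    apply intervalIntegral.integral_mono_on hc0 intc1 int1
    intro t ht
    have htm : t ^ m ≤ 1/2 := by
      rw [← hcm]; exact pow_le_pow_left₀ ht.1 ht.2 m
    have hw_le : w t ≤ 0 := by
      have := pow_nonneg ht.1 m
      simp only [hwdef]
      nlinarith
    have hgle : g t ≤ g c := hg_mono ⟨ht.1, le_trans ht.2 hc1⟩ hgc_mem ht.2
    exact mul_le_mul_of_nonpos_right hgle hw_le
  have h2 : ∫ t in c..(1:ℝ), g c * w t ≤ ∫ t in c..(1:ℝ), g t * w t := by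
    apply intervalIntegral.integral_mono_on hc1 intc2 int2
    intro t ht
    have htm : 1/2 ≤ t ^ m := by
      rw [← hcm]; exact pow_le_pow_left₀ hc0 ht.1 m
    have hw_ge : 0 ≤ w t := by
      have : (0:ℝ) ≤ t ^ m := le_trans (by norm_num) htm
      simp only [hwdef]
      nlinarith
    have hgle : g c ≤ g t := hg_mono hgc_mem ⟨le_trans hc0 ht.1, ht.2⟩ ht.1
    exact mul_le_mul_of_nonneg_right hgle hw_ge
  have hsplit : (∫ t in (0:ℝ)..c, g t * w t) + ∫ t in c..(1:ℝ), g t * w t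
      = ∫ t in (0:ℝ)..1, g t * w t :=
    intervalIntegral.integral_add_adjacent_intervals int1 int2
  have hsplitc : (∫ t in (0:ℝ)..c, g c * w t) + ∫ t in c..(1:ℝ), g c * w t
      = ∫ t in (0:ℝ)..1, g c * w t :=
    intervalIntegral.integral_add_adjacent_intervals intc1 intc2
  have hwval : ∫ t in (0:ℝ)..1, w t = 2/(2*m+1) - 1/(m+1) := by
    have heq : ∀ t : ℝ, w t = 2 * t ^ (2*m) - t ^ m := by
      intro t
      simp only [hwdef, two_mul, pow_add]
      ring
    simp_rw [heq]
    rw [intervalIntegral.integral_sub ((by fun_prop : Continuous (fun t : ℝ => 2 * t ^ (2*m))).intervalIntegrable _ _)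
      ((continuous_pow m).intervalIntegrable _ _),
      intervalIntegral.integral_const_mul, integral_pow, integral_pow]
    push_cast
    ring
  have hwpos : 0 ≤ ∫ t in (0:ℝ)..1, w t := by
    rw [hwval]
    rw [sub_nonneg, div_le_div_iff₀ (by positivity) (by positivity)]
    have : (0:ℝ) ≤ (m:ℝ) := Nat.cast_nonneg m
    linarith
  have hconst : ∫ t in (0:ℝ)..1, g c * w t = g c * ∫ t in (0:ℝ)..1, w t :=
    intervalIntegral.integral_const_mul _ _
  have : 0 ≤ ∫ t in (0:ℝ)..1, g c * w t := by
    rw [hconst]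
    exact mul_nonneg (hg_nonneg c hgc_mem) hwpos
  calc (0:ℝ) ≤ ∫ t in (0:ℝ)..1, g c * w t := this
    _ = (∫ t in (0:ℝ)..c, g c * w t) + ∫ t in c..(1:ℝ), g c * w t := hsplitc.symm
    _ ≤ (∫ t in (0:ℝ)..c, g t * w t) + ∫ t in c..(1:ℝ), g t * w t := add_le_add h1 h2
    _ = ∫ t in (0:ℝ)..1, g t * w t := hsplit
end

section
/- Let X_1, …, X_{n−1} be i.i.d. real random variables with continuous cdf F satisfying F(a) = 0, and let Y = max_j X_j. Then for all r, v with a ≤ r ≤ v, E[max(Y, r)·1{Y ≤ v}] = v·F(v)^{n−1} − ∫_r^v F(z)^{n−1} dz. (Consequently, in a highest-bid-wins all-pay auction with value reserve r, an agent with value v ≥ r bids her expected payment in the corresponding second-price auction, namely v·F(v)^{n−1} − ∫_r^v F(z)^{n−1} dz.) -/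
open MeasureTheory ProbabilityTheory intervalIntegral

/-- **Equilibrium bids in all-pay auctions with a reserve.**
Let `X 0, …, X (n-2)` be `n - 1` i.i.d. real random variables with continuous
cdf `F` satisfying `F a = 0`, and let `Y` be their maximum.  Then for all
`r, v` with `a ≤ r ≤ v`, `E[max (Y, r) · 1{Y ≤ v}] = v * F v ^ (n-1) - ∫ z in r..v, F z ^ (n-1)`.
(This is the equilibrium bid of an agent with value `v ≥ r` in a
highest-bid-wins all-pay auction with value reserve `r` among `n` agents.) -/
theorem all_pay_bid_eq
    (n : ℕ) (hn : 2 ≤ n)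
    {Ω : Type*} [MeasurableSpace Ω] (μ : Measure Ω) [IsProbabilityMeasure μ]
    (X : Fin (n - 1) → Ω → ℝ)
    (hXmeas : ∀ i, Measurable (X i))
    (hXindep : iIndepFun X μ)
    (F : ℝ → ℝ) (hFcont : Continuous F)
    (hXcdf : ∀ i t, (μ {ω | X i ω ≤ t}).toReal = F t)
    (a : ℝ) (hFa : F a = 0)
    (Y : Ω → ℝ)
    (hY : ∀ ω, Y ω = Finset.univ.sup'
      ⟨⟨0, by omega⟩, Finset.mem_univ _⟩ (fun i => X i ω))
    (r v : ℝ) (har : a ≤ r) (hrv : r ≤ v) :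
    ∫ ω in {ω | Y ω ≤ v}, max (Y ω) r ∂μ =
      v * F v ^ (n - 1) - ∫ z in r..v, F z ^ (n - 1) := by
  have i0 : Fin (n - 1) := ⟨0, by omega⟩
  -- Y is measurable
  have hYmeas : Measurable Y := by
    have h1 : Measurable (Finset.univ.sup' ⟨i0, Finset.mem_univ _⟩ X) :=
      Finset.measurable_sup' _ (fun i _ => hXmeas i)
    have hfe : Y = Finset.univ.sup' ⟨i0, Finset.mem_univ _⟩ X := by
      funext ω; rw [hY ω]; exact (Finset.sup'_apply (H := ⟨i0, Finset.mem_univ _⟩) (f := X) ω).symm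
    rw [hfe]; exact h1
  -- basic facts about F
  have hF0 : ∀ t, 0 ≤ F t := fun t => (hXcdf i0 t) ▸ ENNReal.toReal_nonneg
  have hFmono : Monotone F := by
    intro s t hst
    rw [← hXcdf i0 s, ← hXcdf i0 t]
    exact ENNReal.toReal_mono (measure_ne_top μ _)
      (measure_mono (fun ω h => le_trans h hst))
  have hXcdf' : ∀ (i : Fin (n - 1)) t, μ {ω | X i ω ≤ t} = ENNReal.ofReal (F t) := by
    intro i t
    rw [← hXcdf i t, ENNReal.ofReal_toReal (measure_ne_top μ _)]
  -- the cdf of Y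
  have hYset : ∀ t, {ω | Y ω ≤ t} = ⋂ i, X i ⁻¹' Set.Iic t := by
    intro t; ext ω
    simp [hY ω, Finset.sup'_le_iff]
    exact (Finset.sup'_le_iff _ _).trans (by simp)
  have hG : ∀ t, μ {ω | Y ω ≤ t} = ENNReal.ofReal (F t ^ (n - 1)) := by
    intro t
    rw [hYset t]
    have h := hXindep.measure_inter_preimage_eq_mul Finset.univ
      (sets := fun _ => Set.Iic t) (fun i _ => measurableSet_Iic)
    have h2 : (⋂ i ∈ Finset.univ, X i ⁻¹' Set.Iic t) = ⋂ i, X i ⁻¹' Set.Iic t := by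
      simp
    rw [h2] at h
    rw [h]
    calc ∏ i : Fin (n - 1), μ (X i ⁻¹' Set.Iic t)
        = ∏ _i : Fin (n - 1), ENNReal.ofReal (F t) :=
          Finset.prod_congr rfl (fun i _ => hXcdf' i t)
      _ = ENNReal.ofReal (F t) ^ (n - 1) := by
          rw [Finset.prod_const, Finset.card_univ, Fintype.card_fin]
      _ = ENNReal.ofReal (F t ^ (n - 1)) := (ENNReal.ofReal_pow (hF0 t) _).symm
  have hYv : MeasurableSet {ω | Y ω ≤ v} := measurableSet_le hYmeas measurable_const
  have hGv : (μ {ω | Y ω ≤ v}).toReal = F v ^ (n - 1) := by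
    rw [hG v, ENNReal.toReal_ofReal (pow_nonneg (hF0 v) (n - 1))]
  -- the Fubini set
  set S : Set (Ω × ℝ) :=
    {p : Ω × ℝ | p.2 ∈ Set.Ioc r v ∧ (p.2 < Y p.1 ∧ Y p.1 ≤ v)} with hSdef
  have hYfst : Measurable fun p : Ω × ℝ => Y p.1 := hYmeas.comp measurable_fst
  have hS : MeasurableSet S :=
    (measurable_snd measurableSet_Ioc).inter
      ((measurableSet_lt measurable_snd hYfst).inter
        (measurableSet_le hYfst measurable_const))
  -- slice in ω
  have hslice1 : ∀ ω, volume (Prod.mk ω ⁻¹' S) =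
      Set.indicator {ω | Y ω ≤ v} (fun ω => ENNReal.ofReal (Y ω - r)) ω := by
    intro ω
    by_cases h : Y ω ≤ v
    · have : Prod.mk ω ⁻¹' S = Set.Ioo r (Y ω) := by
        ext z
        simp only [hSdef, Set.mem_preimage, Set.mem_setOf_eq, Set.mem_Ioc, Set.mem_Ioo]
        constructor
        · rintro ⟨⟨h1, _⟩, h2, _⟩; exact ⟨h1, h2⟩
        · rintro ⟨h1, h2⟩; exact ⟨⟨h1, (h2.trans_le h).le⟩, h2, h⟩
      rw [this, Real.volume_Ioo]
      simp [Set.indicator_apply, h]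
    · have : Prod.mk ω ⁻¹' S = ∅ := by
        ext z
        simp only [hSdef, Set.mem_preimage, Set.mem_setOf_eq, Set.mem_empty_iff_false,
          iff_false]
        rintro ⟨_, _, hle⟩; exact h hle
      rw [this, measure_empty]
      simp [Set.indicator_apply, h]
  -- slice in z
  have hslice2 : ∀ z, μ ((fun ω => (ω, z)) ⁻¹' S) =
      Set.indicator (Set.Ioc r v)
        (fun z => ENNReal.ofReal (F v ^ (n - 1) - F z ^ (n - 1))) z := by
    intro z
    by_cases h : z ∈ Set.Ioc r v
    · have hset : (fun ω => (ω, z)) ⁻¹' S = {ω | Y ω ≤ v} \ {ω | Y ω ≤ z} := by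
        ext ω
        simp only [hSdef, Set.mem_preimage, Set.mem_setOf_eq, Set.mem_diff, not_le]
        constructor
        · rintro ⟨_, h2, h3⟩; exact ⟨h3, h2⟩
        · rintro ⟨h1, h2⟩; exact ⟨h, h2, h1⟩
      have hsub : {ω | Y ω ≤ z} ⊆ {ω | Y ω ≤ v} :=
        fun ω hω => le_trans hω h.2
      rw [hset, measure_diff hsub ((measurableSet_le hYmeas measurable_const).nullMeasurableSet)
        (measure_ne_top μ _), hG v, hG z, Set.indicator_of_mem h,
        ← ENNReal.ofReal_sub _ (pow_nonneg (hF0 z) (n - 1))]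
    · have hset : (fun ω => (ω, z)) ⁻¹' S = ∅ := by
        ext ω
        simp only [hSdef, Set.mem_preimage, Set.mem_setOf_eq, Set.mem_empty_iff_false,
          iff_false]
        rintro ⟨h1, _⟩; exact h h1
      rw [hset, measure_empty, Set.indicator_of_notMem (fun hc => h hc)]
  -- Fubini
  have hfub : ∫⁻ ω in {ω | Y ω ≤ v}, ENNReal.ofReal (Y ω - r) ∂μ =
      ∫⁻ z in Set.Ioc r v, ENNReal.ofReal (F v ^ (n - 1) - F z ^ (n - 1)) := by
    have h1 := Measure.prod_apply (μ := μ) (ν := volume) hS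
    have h2 := Measure.prod_apply_symm (μ := μ) (ν := volume) hS
    rw [h1] at h2
    calc ∫⁻ ω in {ω | Y ω ≤ v}, ENNReal.ofReal (Y ω - r) ∂μ
        = ∫⁻ ω, Set.indicator {ω | Y ω ≤ v}
            (fun ω => ENNReal.ofReal (Y ω - r)) ω ∂μ := by
          rw [lintegral_indicator hYv]
      _ = ∫⁻ ω, volume (Prod.mk ω ⁻¹' S) ∂μ := by
          refine lintegral_congr fun ω => (hslice1 ω).symm
      _ = ∫⁻ z, μ ((fun ω => (ω, z)) ⁻¹' S) := h2
      _ = ∫⁻ z, Set.indicator (Set.Ioc r v)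
            (fun z => ENNReal.ofReal (F v ^ (n - 1) - F z ^ (n - 1))) z := by
          refine lintegral_congr fun z => hslice2 z
      _ = ∫⁻ z in Set.Ioc r v, ENNReal.ofReal (F v ^ (n - 1) - F z ^ (n - 1)) := by
          rw [lintegral_indicator measurableSet_Ioc]
  -- convert to Bochner integrals
  have hofmax : ∀ x : ℝ, ENNReal.ofReal x = ENNReal.ofReal (max x 0) := by
    intro x
    rcases le_total x 0 with h | h
    · rw [max_eq_right h, ENNReal.ofReal_of_nonpos h, ENNReal.ofReal_zero]
    · rw [max_eq_left h]
  have hhmeas : Measurable fun ω => max (Y ω - r) 0 :=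
    (hYmeas.sub measurable_const).max measurable_const
  have hhint : Integrable (fun ω => max (Y ω - r) 0) (μ.restrict {ω | Y ω ≤ v}) := by
    refine Integrable.mono' (integrable_const (v - r)) hhmeas.aestronglyMeasurable ?_
    filter_upwards [ae_restrict_mem hYv] with ω hω
    rw [Real.norm_eq_abs, abs_of_nonneg (le_max_right _ _)]
    have : Y ω ≤ v := hω
    exact max_le (by linarith) (by linarith)
  have hleft : ENNReal.ofReal (∫ ω in {ω | Y ω ≤ v}, max (Y ω - r) 0 ∂μ) =
      ∫⁻ ω in {ω | Y ω ≤ v}, ENNReal.ofReal (Y ω - r) ∂μ := by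
    rw [ofReal_integral_eq_lintegral_ofReal hhint
      (Filter.Eventually.of_forall fun ω => le_max_right _ _)]
    exact lintegral_congr fun ω => (hofmax _).symm
  have hgcont : Continuous fun z => F v ^ (n - 1) - F z ^ (n - 1) :=
    continuous_const.sub (hFcont.pow (n - 1))
  have hgint : IntegrableOn (fun z => F v ^ (n - 1) - F z ^ (n - 1)) (Set.Ioc r v) volume :=
    hgcont.integrableOn_Ioc
  have hgnn : ∀ᵐ z ∂(volume.restrict (Set.Ioc r v)),
      0 ≤ F v ^ (n - 1) - F z ^ (n - 1) := by
    filter_upwards [ae_restrict_mem measurableSet_Ioc] with z hz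
    have : F z ≤ F v := hFmono hz.2
    have := pow_le_pow_left₀ (hF0 z) this (n - 1)
    linarith
  have hright : ENNReal.ofReal (∫ z in Set.Ioc r v, F v ^ (n - 1) - F z ^ (n - 1)) =
      ∫⁻ z in Set.Ioc r v, ENNReal.ofReal (F v ^ (n - 1) - F z ^ (n - 1)) :=
    ofReal_integral_eq_lintegral_ofReal hgint hgnn
  have hkey : ∫ ω in {ω | Y ω ≤ v}, max (Y ω - r) 0 ∂μ =
      ∫ z in Set.Ioc r v, F v ^ (n - 1) - F z ^ (n - 1) := by
    have h1 : ENNReal.ofReal (∫ ω in {ω | Y ω ≤ v}, max (Y ω - r) 0 ∂μ) =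
        ENNReal.ofReal (∫ z in Set.Ioc r v, F v ^ (n - 1) - F z ^ (n - 1)) := by
      rw [hleft, hright, hfub]
    have hn1 : 0 ≤ ∫ ω in {ω | Y ω ≤ v}, max (Y ω - r) 0 ∂μ :=
      integral_nonneg fun ω => le_max_right _ _
    have hn2 : 0 ≤ ∫ z in Set.Ioc r v, F v ^ (n - 1) - F z ^ (n - 1) :=
      integral_nonneg_of_ae hgnn
    exact (ENNReal.ofReal_eq_ofReal_iff hn1 hn2).mp h1
  -- assemble
  have hmax : ∀ ω, max (Y ω) r = max (Y ω - r) 0 + r := by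
    intro ω
    rcases le_total (Y ω) r with h | h
    · rw [max_eq_right h, max_eq_right (by linarith)]; ring
    · rw [max_eq_left h, max_eq_left (by linarith)]; ring
  have hsplit : ∫ ω in {ω | Y ω ≤ v}, max (Y ω) r ∂μ =
      (∫ ω in {ω | Y ω ≤ v}, max (Y ω - r) 0 ∂μ) + r * (F v ^ (n - 1)) := by
    have : ∫ ω in {ω | Y ω ≤ v}, max (Y ω) r ∂μ =
        ∫ ω in {ω | Y ω ≤ v}, (max (Y ω - r) 0 + r) ∂μ := by
      refine integral_congr_ae (Filter.Eventually.of_forall fun ω => hmax ω)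
    rw [this, integral_add hhint (integrable_const r), setIntegral_const,
      measureReal_def, hGv, smul_eq_mul, mul_comm]
  have hIoc : ∫ z in Set.Ioc r v, F v ^ (n - 1) - F z ^ (n - 1) =
      (v - r) * F v ^ (n - 1) - ∫ z in r..v, F z ^ (n - 1) := by
    rw [← intervalIntegral.integral_of_le hrv,
      intervalIntegral.integral_sub (Continuous.intervalIntegrable continuous_const r v)
        (by exact Continuous.intervalIntegrable (hFcont.pow (n - 1)) r v :
          IntervalIntegrable (fun z => F z ^ (n - 1)) volume r v),
      intervalIntegral.integral_const, smul_eq_mul]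
  rw [hsplit, hkey, hIoc]
  ring
end

section
/- For every measurable function x : [a,b] → [0,1], ∫_a^b ( v·x(v) − ∫_a^v x(z) dz )·F(v)^{n-1}·f(v) dv = ∫_a^b x(v)·ψ_n(v)·f(v) dv. (In auction terms: for any symmetric all-pay auction whose interim allocation rule is x, the expected maximum payment equals the expected virtual surplus for maximum payment, MP(A) = E[Σ_i x_i(v) ψ_n(v_i)].) -/
open MeasureTheory intervalIntegral

/-- **Expected maximum payment equals expected virtual surplus.**
`n ≥ 2` agents have values drawn i.i.d. from a distribution with continuous,
strictly increasing cdf `F`, density `f` positive on the support `[a, b]`,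
`F a = 0`, `F b = 1`.  With the virtual value for maximum payment
`ψ_n(v) = v * F v ^ (n-1) - (1 - F v ^ n) / (n * f v)`, for every measurable
interim allocation rule `x : [a,b] → [0,1]`,
`∫ v in a..b, (v * x v - ∫ z in a..v, x z) * F v ^ (n-1) * f v
  = ∫ v in a..b, x v * ψ_n v * f v`. -/
theorem max_payment_eq_virtual_surplus
    (n : ℕ) (hn : 2 ≤ n) (a b : ℝ) (hab : a < b)
    (F f : ℝ → ℝ)
    (hFcont : Continuous F)
    (hFmono : StrictMonoOn F (Set.Icc a b))
    (hFa : F a = 0) (hFb : F b = 1)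
    (hfpos : ∀ x ∈ Set.Icc a b, 0 < f x)
    (hderiv : ∀ x ∈ Set.Icc a b, HasDerivAt F (f x) x)
    (ψ : ℝ → ℝ)
    (hψ : ∀ v, ψ v = v * F v ^ (n - 1) - (1 - F v ^ n) / (n * f v))
    (x : ℝ → ℝ) (hx_meas : Measurable x)
    (hx_range : ∀ v ∈ Set.Icc a b, x v ∈ Set.Icc (0 : ℝ) 1) :
    ∫ v in a..b, (v * x v - ∫ z in a..v, x z) * F v ^ (n - 1) * f v =
      ∫ v in a..b, x v * ψ v * f v := by
  have hn0 : (n : ℝ) ≠ 0 := by positivity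
  have ha_mem : a ∈ Set.Icc a b := Set.left_mem_Icc.2 hab.le
  have hb_mem : b ∈ Set.Icc a b := Set.right_mem_Icc.2 hab.le
  -- f equals deriv F on [a,b]
  have hfd : ∀ v ∈ Set.Icc a b, f v = deriv F v :=
    fun v hv => ((hderiv v hv).deriv).symm
  set g : ℝ → ℝ := fun v => F v ^ (n - 1) * deriv F v with hg_def
  have hg_meas : Measurable g :=
    ((hFcont.measurable).pow_const _).mul (measurable_deriv F)
  have hF0 : ∀ v ∈ Set.Icc a b, 0 ≤ F v := by
    intro v hv
    have := hFmono.monotoneOn ha_mem hv hv.1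
    rwa [hFa] at this
  have hF1 : ∀ v ∈ Set.Icc a b, F v ≤ 1 := by
    intro v hv
    have := hFmono.monotoneOn hv hb_mem hv.2
    rwa [hFb] at this
  have hg_nonneg : ∀ v ∈ Set.Icc a b, 0 ≤ g v := by
    intro v hv
    have : 0 < deriv F v := (hfd v hv) ▸ hfpos v hv
    exact mul_nonneg (pow_nonneg (hF0 v hv) _) this.le
  -- g is the derivative of F^n / n on [a,b]
  have hH : ∀ v ∈ Set.Icc a b, HasDerivAt (fun y => F y ^ n / n) (g v) v := by
    intro v hv
    have h1 : HasDerivAt (fun y => F y ^ n) ((n : ℝ) * F v ^ (n - 1) * f v) v :=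
      (hderiv v hv).pow n
    have h2 := h1.div_const (n : ℝ)
    convert h2 using 1
    show F v ^ (n - 1) * deriv F v = (n : ℝ) * F v ^ (n - 1) * f v / n
    rw [← hfd v hv]
    rw [mul_assoc, mul_div_cancel_left₀ _ hn0]
    all_goals rfl
  have hgint : IntervalIntegrable g volume a b := by
    apply intervalIntegrable_deriv_of_nonneg
      (g := fun y => F y ^ n / n)
    · exact ((hFcont.pow n).div_const _).continuousOn
    · intro v hv
      rw [min_eq_left hab.le, max_eq_right hab.le] at hv
      exact hH v (Set.mem_Icc_of_Ioo hv)
    · intro v hv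
      rw [min_eq_left hab.le, max_eq_right hab.le] at hv
      exact hg_nonneg v (Set.mem_Icc_of_Ioo hv)
  have hgInt : IntegrableOn g (Set.Ioc a b) volume :=
    (intervalIntegrable_iff_integrableOn_Ioc_of_le hab.le).1 hgint
  -- FTC: tail integral of g
  have hK : ∀ z ∈ Set.Icc a b, (∫ v in z..b, g v) = (1 - F z ^ n) / n := by
    intro z hz
    have hsub : Set.uIcc z b ⊆ Set.Icc a b := by
      rw [Set.uIcc_of_le hz.2]
      exact Set.Icc_subset_Icc hz.1 le_rfl
    have hsub' : Set.uIcc z b ⊆ Set.uIcc a b := by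
      rw [Set.uIcc_of_le hz.2, Set.uIcc_of_le hab.le]
      exact Set.Icc_subset_Icc hz.1 le_rfl
    have := intervalIntegral.integral_eq_sub_of_hasDerivAt
      (f := fun y => F y ^ n / n) (f' := g)
      (fun v hv => hH v (hsub hv))
      (hgint.mono_set hsub')
    rw [this]
    show F b ^ n / (n:ℝ) - F z ^ n / n = (1 - F z ^ n) / n
    rw [hFb]
    ring
  have hxIoc : ∀ v ∈ Set.Ioc a b, |x v| ≤ 1 := by
    intro v hv
    have h := hx_range v (Set.Ioc_subset_Icc_self hv)
    rw [abs_le]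
    exact ⟨by linarith [h.1], h.2⟩
  -- integrability of x on [a,b]
  have hxint : IntegrableOn x (Set.Icc a b) volume := by
    apply Integrable.mono' (g := fun _ => (1 : ℝ))
      (integrableOn_const measure_Icc_lt_top.ne)
      hx_meas.aestronglyMeasurable
    refine (ae_restrict_iff' measurableSet_Icc).2 (Filter.Eventually.of_forall ?_)
    intro v hv
    have h := hx_range v hv
    rw [Real.norm_eq_abs, abs_le]
    exact ⟨by linarith [h.1], h.2⟩
  -- the primitive G
  have hGC : ContinuousOn (fun v => ∫ z in a..v, x z) (Set.Icc a b) := by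
    have := intervalIntegral.continuousOn_primitive_interval
      (a := a) (b := b) (f := x) (μ := volume)
      (by rwa [Set.uIcc_of_le hab.le])
    rwa [Set.uIcc_of_le hab.le] at this
  have hGbd : ∀ v ∈ Set.Icc a b, |∫ z in a..v, x z| ≤ b - a := by
    intro v hv
    have h1 : ‖∫ z in a..v, x z‖ ≤ 1 * |v - a| := by
      apply intervalIntegral.norm_integral_le_of_norm_le_const
      intro z hz
      rw [Set.uIoc_of_le hv.1] at hz
      rw [Real.norm_eq_abs]
      exact hxIoc z (⟨hz.1, hz.2.trans hv.2⟩)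
    rw [Real.norm_eq_abs] at h1
    have : |v - a| = v - a := abs_of_nonneg (by linarith [hv.1])
    rw [this] at h1
    linarith [hv.2]
  -- integrability of the pieces
  have hI1 : IntervalIntegrable (fun v => v * x v * g v) volume a b := by
    rw [intervalIntegrable_iff_integrableOn_Ioc_of_le hab.le]
    apply Integrable.mono' (f := fun v => v * x v * g v)
      (g := fun v => (|a| + |b|) * |g v|)
      ((hgInt.abs).const_mul _)
      ((measurable_id.mul hx_meas).mul hg_meas).aestronglyMeasurable
    refine (ae_restrict_iff' measurableSet_Ioc).2 (Filter.Eventually.of_forall ?_)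
    intro v hv
    rw [Real.norm_eq_abs, abs_mul, abs_mul]
    have hv' : |v| ≤ |a| + |b| := by
      rw [abs_le]
      constructor
      · nlinarith [hv.1.le, hv.2, abs_nonneg a, abs_nonneg b, neg_abs_le a, le_abs_self b]
      · nlinarith [hv.1.le, hv.2, abs_nonneg a, abs_nonneg b, neg_abs_le a, le_abs_self b]
    have hx1 := hxIoc v hv
    have h1 : |v| * |x v| ≤ (|a| + |b|) * 1 :=
      mul_le_mul hv' hx1 (abs_nonneg _) (by positivity)
    calc |v| * |x v| * |g v| ≤ ((|a| + |b|) * 1) * |g v| :=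
          mul_le_mul_of_nonneg_right h1 (abs_nonneg _)
      _ = (|a| + |b|) * |g v| := by ring
  have hI3 : IntervalIntegrable (fun v => (∫ z in a..v, x z) * g v) volume a b := by
    rw [intervalIntegrable_iff_integrableOn_Ioc_of_le hab.le]
    apply Integrable.mono' (g := fun v => (b - a) * |g v|)
      ((hgInt.abs).const_mul _)
    · exact (((hGC.mono Set.Ioc_subset_Icc_self).aestronglyMeasurable
        measurableSet_Ioc).mul hg_meas.aestronglyMeasurable.restrict)
    refine (ae_restrict_iff' measurableSet_Ioc).2 (Filter.Eventually.of_forall ?_)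
    intro v hv
    rw [Real.norm_eq_abs, abs_mul]
    have := hGbd v (Set.Ioc_subset_Icc_self hv)
    nlinarith [abs_nonneg (g v), abs_nonneg (∫ z in a..v, x z)]
  have hI2 : IntervalIntegrable (fun v => x v * ((1 - F v ^ n) / n)) volume a b := by
    rw [intervalIntegrable_iff_integrableOn_Ioc_of_le hab.le]
    apply Integrable.mono' (g := fun _ => (1 : ℝ))
      (integrableOn_const measure_Ioc_lt_top.ne)
      (hx_meas.mul (((measurable_const.sub
        ((hFcont.measurable).pow_const n)).div_const _))).aestronglyMeasurable
    refine (ae_restrict_iff' measurableSet_Ioc).2 (Filter.Eventually.of_forall ?_)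
    intro v hv
    have hv' := Set.Ioc_subset_Icc_self hv
    have h0 : (0 : ℝ) ≤ F v ^ n := pow_nonneg (hF0 v hv') n
    have h1 : F v ^ n ≤ 1 := pow_le_one₀ (hF0 v hv') (hF1 v hv')
    have hn1 : (1 : ℝ) ≤ n := by exact_mod_cast Nat.one_le_of_lt hn
    rw [Real.norm_eq_abs]
    show |x v * ((1 - F v ^ n) / (n : ℝ))| ≤ 1
    rw [abs_mul]
    have habs : |(1 - F v ^ n) / (n : ℝ)| ≤ 1 := by
      rw [abs_div, abs_of_nonneg (by linarith : (0:ℝ) ≤ 1 - F v ^ n),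
        abs_of_nonneg (by positivity : (0:ℝ) ≤ (n:ℝ))]
      rw [div_le_one (by positivity)]
      linarith
    have := hxIoc v hv
    nlinarith [abs_nonneg (x v), abs_nonneg ((1 - F v ^ n) / (n : ℝ))]
  -- The key Fubini step
  have hkey : (∫ v in a..b, (∫ z in a..v, x z) * g v)
      = ∫ z in a..b, x z * ((1 - F z ^ n) / n) := by
    rw [intervalIntegral.integral_of_le hab.le, intervalIntegral.integral_of_le hab.le]
    set μ := volume.restrict (Set.Ioc a b) with hμ
    set S : Set (ℝ × ℝ) := {q : ℝ × ℝ | q.2 ≤ q.1} with hS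
    have hSmeas : MeasurableSet S := measurableSet_le measurable_snd measurable_fst
    have step1 : (∫ v in Set.Ioc a b, (∫ z in a..v, x z) * g v)
        = ∫ v, (∫ z, S.indicator (fun q => x q.2) (v, z) * g v ∂μ) ∂μ := by
      apply setIntegral_congr_fun measurableSet_Ioc
      intro v hv
      show (∫ z in a..v, x z) * g v
        = ∫ z, S.indicator (fun q => x q.2) (v, z) * g v ∂μ
      have e1 : (fun z => S.indicator (fun q => x q.2) (v, z) * g v)
          = fun z => (Set.Iic v).indicator x z * g v := by
        funext z
        by_cases h : z ≤ v
        · simp [Set.indicator_apply, hS, h]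
        · simp [Set.indicator_apply, hS, h]
      rw [e1]
      rw [MeasureTheory.integral_mul_const]
      congr 1
      rw [hμ, MeasureTheory.integral_indicator measurableSet_Iic,
        Measure.restrict_restrict measurableSet_Iic]
      have : Set.Iic v ∩ Set.Ioc a b = Set.Ioc a v := by
        ext t
        simp only [Set.mem_inter_iff, Set.mem_Iic, Set.mem_Ioc]
        constructor
        · rintro ⟨h1, h2, h3⟩; exact ⟨h2, h1⟩
        · rintro ⟨h1, h2⟩; exact ⟨h2, h1, h2.trans hv.2⟩
      rw [this, intervalIntegral.integral_of_le hv.1.le]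
    have hφint : Integrable (Function.uncurry fun v z =>
        S.indicator (fun q => x q.2) (v, z) * g v) (μ.prod μ) := by
      have hmeas : Measurable (fun p : ℝ × ℝ =>
          S.indicator (fun q => x q.2) p * g p.1) :=
        (Measurable.indicator (hx_meas.comp measurable_snd) hSmeas).mul
          (hg_meas.comp measurable_fst)
      apply Integrable.mono' (g := fun p : ℝ × ℝ => |g p.1| * (1 : ℝ))
        (Integrable.mul_prod hgInt.abs
          (integrableOn_const measure_Ioc_lt_top.ne))
        hmeas.aestronglyMeasurable
      have hprod : μ.prod μ = (volume.prod volume).restrict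
          (Set.Ioc a b ×ˢ Set.Ioc a b) := Measure.prod_restrict _ _
      rw [hprod]
      refine (ae_restrict_iff' (measurableSet_Ioc.prod measurableSet_Ioc)).2
        (Filter.Eventually.of_forall ?_)
      rintro ⟨v, z⟩ hp
      simp only [Set.mem_prod] at hp
      rw [Real.norm_eq_abs, abs_mul, mul_one]
      have hind : |S.indicator (fun q => x q.2) (v, z)| ≤ 1 := by
        by_cases h : z ≤ v
        · rw [Set.indicator_of_mem (by exact h)]
          exact hxIoc z hp.2
        · rw [Set.indicator_of_notMem (by exact h)]
          simp
      nlinarith [abs_nonneg (g v), abs_nonneg (S.indicator (fun q => x q.2) (v, z))]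
    have step2 : (∫ v, (∫ z, S.indicator (fun q => x q.2) (v, z) * g v ∂μ) ∂μ)
        = ∫ z, (∫ v, S.indicator (fun q => x q.2) (v, z) * g v ∂μ) ∂μ :=
      MeasureTheory.integral_integral_swap hφint
    have step3 : (∫ z, (∫ v, S.indicator (fun q => x q.2) (v, z) * g v ∂μ) ∂μ)
        = ∫ z in Set.Ioc a b, x z * ((1 - F z ^ n) / n) := by
      apply setIntegral_congr_fun measurableSet_Ioc
      intro z hz
      show (∫ v, S.indicator (fun q => x q.2) (v, z) * g v ∂μ)
        = x z * ((1 - F z ^ n) / n)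
      have e1 : (fun v => S.indicator (fun q => x q.2) (v, z) * g v)
          = fun v => (Set.Ici z).indicator (fun v => x z * g v) v := by
        funext v
        by_cases h : z ≤ v
        · simp [Set.indicator_apply, hS, h]
        · simp [Set.indicator_apply, hS, h]
      rw [e1, hμ, MeasureTheory.integral_indicator measurableSet_Ici,
        Measure.restrict_restrict measurableSet_Ici]
      have : Set.Ici z ∩ Set.Ioc a b = Set.Icc z b := by
        ext t
        simp only [Set.mem_inter_iff, Set.mem_Ici, Set.mem_Ioc, Set.mem_Icc]
        constructor
        · rintro ⟨h1, _, h3⟩; exact ⟨h1, h3⟩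
        · rintro ⟨h1, h2⟩; exact ⟨h1, hz.1.trans_le h1, h2⟩
      rw [this, MeasureTheory.integral_Icc_eq_integral_Ioc,
        MeasureTheory.integral_const_mul,
        ← intervalIntegral.integral_of_le hz.2,
        hK z (Set.Ioc_subset_Icc_self hz)]
    rw [step1, step2, step3]
  -- Now assemble everything
  have hLHS : (∫ v in a..b, (v * x v - ∫ z in a..v, x z) * F v ^ (n - 1) * f v)
      = (∫ v in a..b, v * x v * g v) - ∫ v in a..b, (∫ z in a..v, x z) * g v := by
    rw [← intervalIntegral.integral_sub hI1 hI3]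
    apply intervalIntegral.integral_congr
    intro v hv
    rw [Set.uIcc_of_le hab.le] at hv
    show (v * x v - ∫ z in a..v, x z) * F v ^ (n - 1) * f v
      = v * x v * g v - (∫ z in a..v, x z) * g v
    rw [hfd v hv]
    show _ = v * x v * (F v ^ (n - 1) * deriv F v) - (∫ z in a..v, x z) * (F v ^ (n - 1) * deriv F v)
    ring
  have hRHS : (∫ v in a..b, x v * ψ v * f v)
      = (∫ v in a..b, v * x v * g v) - ∫ v in a..b, x v * ((1 - F v ^ n) / n) := by
    rw [← intervalIntegral.integral_sub hI1 hI2]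
    apply intervalIntegral.integral_congr
    intro v hv
    rw [Set.uIcc_of_le hab.le] at hv
    have hd : deriv F v ≠ 0 := by
      rw [← hfd v hv]; exact (hfpos v hv).ne'
    show x v * ψ v * f v = v * x v * g v - x v * ((1 - F v ^ n) / n)
    rw [hψ v, hfd v hv]
    show _ = v * x v * (F v ^ (n - 1) * deriv F v) - x v * ((1 - F v ^ n) / n)
    field_simp
  rw [hLHS, hRHS, hkey]
end

section
/- Suppose the virtual value for maximum payment ψ_n is nondecreasing on [a,b], and let r = inf{ z ∈ [a,b] : ψ_n(z) ≥ 0 }. Then for every measurable allocation rule x : [a,b]^n → [0,1]^n with Σ_{i=1}^n x_i(v) ≤ 1 for all v, the expected virtual surplus satisfies E_{V ~ F^{⊗n}}[ Σ_{i=1}^n x_i(V)·ψ_n(V_i) ] ≤ n·∫_r^b ψ_n(v)·F(v)^{n-1}·f(v) dv, and the right-hand side is the expected virtual surplus of the allocation rule that gives the entire reward to the agent with the highest value whenever that value is at least r. (Hence for an n-regular distribution the optimal all-pay auction is a highest-bid-wins auction with a reserve price.) -/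
open MeasureTheory intervalIntegral
open scoped NNReal ENNReal

/-- **For `n`-regular distributions, the highest-value-wins auction with the
appropriate reserve maximizes expected virtual surplus for maximum payment.**
`n ≥ 2` agents have values drawn i.i.d. from the distribution `μ` on `[a, b]`
with density `f` and cdf `F` (continuous, strictly increasing, `F a = 0`,
`F b = 1`, `f` positive on `[a,b]`).  Suppose the virtual value for maximum
payment `ψ_n(v) = v * F v ^ (n-1) - (1 - F v ^ n)/(n * f v)` is nondecreasing
on `[a, b]`, and let `r = inf { z ∈ [a,b] | ψ_n z ≥ 0 }`.  Then every
measurable allocation rule `x : [a,b]^n → [0,1]^n` with `∑ i, x v i ≤ 1` has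
expected virtual surplus at most `n * ∫ v in r..b, ψ_n v * F v ^ (n-1) * f v`,
the expected virtual surplus of serving the highest value above `r`. -/
theorem regular_optimal_is_reserve_auction
    (n : ℕ) (hn : 2 ≤ n) (a b : ℝ) (hab : a < b) (hb : 0 ≤ b)
    (F f : ℝ → ℝ)
    (hFcont : Continuous F)
    (hFmono : StrictMonoOn F (Set.Icc a b))
    (hFa : F a = 0) (hFb : F b = 1)
    (hfmeas : Measurable f)
    (hfpos : ∀ x ∈ Set.Icc a b, 0 < f x)
    (hderiv : ∀ x ∈ Set.Icc a b, HasDerivAt F (f x) x)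
    (ψ : ℝ → ℝ)
    (hψ : ∀ v, ψ v = v * F v ^ (n - 1) - (1 - F v ^ n) / (n * f v))
    (hreg : MonotoneOn ψ (Set.Icc a b))
    (r : ℝ) (hr : r = sInf {z ∈ Set.Icc a b | 0 ≤ ψ z})
    (μ : Measure ℝ)
    (hμ : μ = (volume.restrict (Set.Icc a b)).withDensity
      (fun v => ENNReal.ofReal (f v)))
    (x : (Fin n → ℝ) → Fin n → ℝ)
    (hx_meas : ∀ i, Measurable (fun v => x v i))
    (hx_range : ∀ v i, x v i ∈ Set.Icc (0 : ℝ) 1)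
    (hx_sum : ∀ v, ∑ i, x v i ≤ 1) :
    ∫ V, (∑ i, x V i * ψ (V i)) ∂(Measure.pi fun _ : Fin n => μ) ≤
      (n : ℝ) * ∫ v in r..b, ψ v * F v ^ (n - 1) * f v := by
  haveI : NeZero n := ⟨by omega⟩
  have hn0 : (0:ℝ) < n := by exact_mod_cast Nat.lt_of_lt_of_le Nat.zero_lt_two hn
  have hnne : n ≠ 0 := by omega
  -- basic facts about F
  have hFmono' : MonotoneOn F (Set.Icc a b) := hFmono.monotoneOn
  have hF0 : ∀ v ∈ Set.Icc a b, 0 ≤ F v := fun v hv => by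
    have := hFmono' (Set.left_mem_Icc.2 hab.le) hv hv.1
    linarith [hFa ▸ this]
  have hF1 : ∀ v ∈ Set.Icc a b, F v ≤ 1 := fun v hv => by
    have := hFmono' hv (Set.right_mem_Icc.2 hab.le) hv.2
    linarith [hFb ▸ this]
  have hfnn : ∀ v ∈ Set.Icc a b, 0 ≤ f v := fun v hv => (hfpos v hv).le
  -- facts about the reserve r
  set S : Set ℝ := {z ∈ Set.Icc a b | 0 ≤ ψ z} with hSdef
  have hψb : ψ b = b := by simp [hψ b, hFb]
  have hbS : b ∈ S := ⟨Set.right_mem_Icc.2 hab.le, by rw [hψb]; exact hb⟩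
  have hSbdd : BddBelow S := ⟨a, fun z hz => hz.1.1⟩
  have hra : a ≤ r := hr ▸ le_csInf ⟨b, hbS⟩ (fun z hz => hz.1.1)
  have hrb : r ≤ b := hr ▸ csInf_le hSbdd hbS
  have hψpos : ∀ v, r < v → v ≤ b → 0 ≤ ψ v := by
    intro v hrv hvb
    obtain ⟨z, hzS, hzv⟩ := (csInf_lt_iff hSbdd ⟨b, hbS⟩).1 (hr ▸ hrv)
    exact hzS.2.trans (hreg hzS.1 ⟨hzS.1.1.trans hzv.le, hvb⟩ hzv.le)
  have hψneg : ∀ v, a ≤ v → v < r → ψ v < 0 := by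
    intro v hav hvr
    have hnm : v ∉ S := notMem_of_lt_csInf (hr ▸ hvr) hSbdd
    have hvmem : v ∈ Set.Icc a b := ⟨hav, hvr.le.trans hrb⟩
    by_contra h
    exact hnm ⟨hvmem, not_lt.1 h⟩
  -- measurability of ψ
  have hψmeas : Measurable ψ := by
    have : ψ = fun v => v * F v ^ (n - 1) - (1 - F v ^ n) / (n * f v) := funext hψ
    rw [this]
    exact (measurable_id.mul (hFcont.measurable.pow_const _)).sub
      ((measurable_const.sub (hFcont.measurable.pow_const _)).div
        (measurable_const.mul hfmeas))
  -- integrability of f and of the density of the maximum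
  have hfint : IntegrableOn f (Set.Icc a b) volume := by
    rw [integrableOn_Icc_iff_integrableOn_Ioc]
    exact integrableOn_deriv_of_nonneg hFcont.continuousOn
      (fun v hv => hderiv v ⟨hv.1.le, hv.2.le⟩) (fun v hv => hfnn v ⟨hv.1.le, hv.2.le⟩)
  have hFTC : ∀ c, a ≤ c → c ≤ b → ∫ v in a..c, f v = F c := by
    intro c hac hcb
    have hsub : Set.uIcc a c ⊆ Set.Icc a b := by
      rw [Set.uIcc_of_le hac]; exact Set.Icc_subset_Icc le_rfl hcb
    have := intervalIntegral.integral_eq_sub_of_hasDerivAt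
      (f := F) (f' := f) (fun v hv => hderiv v (hsub hv))
      (((intervalIntegrable_iff_integrableOn_Ioc_of_le hac).2
        (hfint.mono_set (fun v hv => ⟨hv.1.le, hv.2.trans hcb⟩))))
    rw [this, hFa, sub_zero]
  have hgderiv : ∀ v ∈ Set.Icc a b,
      HasDerivAt (fun y => F y ^ n) ((n:ℝ) * F v ^ (n - 1) * f v) v :=
    fun v hv => HasDerivAt.fun_pow (hderiv v hv) n
  have hgnn : ∀ v ∈ Set.Icc a b, 0 ≤ (n:ℝ) * F v ^ (n - 1) * f v := fun v hv =>
    mul_nonneg (mul_nonneg hn0.le (pow_nonneg (hF0 v hv) _)) (hfnn v hv)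
  have hgint : IntegrableOn (fun v => (n:ℝ) * F v ^ (n - 1) * f v) (Set.Icc a b) volume := by
    rw [integrableOn_Icc_iff_integrableOn_Ioc]
    exact integrableOn_deriv_of_nonneg (hFcont.pow n).continuousOn
      (fun v hv => hgderiv v ⟨hv.1.le, hv.2.le⟩) (fun v hv => hgnn v ⟨hv.1.le, hv.2.le⟩)
  have hFTC2 : ∀ c, a ≤ c → c ≤ b → ∫ v in a..c, (n:ℝ) * F v ^ (n - 1) * f v = F c ^ n := by
    intro c hac hcb
    have hsub : Set.uIcc a c ⊆ Set.Icc a b := by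
      rw [Set.uIcc_of_le hac]; exact Set.Icc_subset_Icc le_rfl hcb
    have := intervalIntegral.integral_eq_sub_of_hasDerivAt
      (f := fun y => F y ^ n) (f' := fun v => (n:ℝ) * F v ^ (n - 1) * f v)
      (fun v hv => hgderiv v (hsub hv))
      (((intervalIntegrable_iff_integrableOn_Ioc_of_le hac).2
        (hgint.mono_set (fun v hv => ⟨hv.1.le, hv.2.trans hcb⟩))))
    rw [this]; simp [hFa, zero_pow hnne]
  -- computation of Iic-measures of withDensity measures
  have key : ∀ (g : ℝ → ℝ), IntegrableOn g (Set.Icc a b) volume →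
      (∀ v ∈ Set.Icc a b, 0 ≤ g v) → ∀ t : ℝ,
      ((volume.restrict (Set.Icc a b)).withDensity (fun v => ENNReal.ofReal (g v)))
        (Set.Iic t)
        = if a ≤ t then ENNReal.ofReal (∫ v in a..(min t b), g v) else 0 := by
    intro g hgint hgnn t
    rw [withDensity_apply _ measurableSet_Iic, Measure.restrict_restrict measurableSet_Iic]
    split_ifs with h
    · have hset : Set.Iic t ∩ Set.Icc a b = Set.Icc a (min t b) := by
        ext v; simp only [Set.mem_inter_iff, Set.mem_Iic, Set.mem_Icc, le_min_iff]
        constructor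
        · rintro ⟨h1, h2, h3⟩; exact ⟨h2, h1, h3⟩
        · rintro ⟨h1, h2, h3⟩; exact ⟨h2, h1, h3⟩
      have hmintb : min t b ≤ b := min_le_right _ _
      have hamin : a ≤ min t b := le_min h hab.le
      rw [hset, ← MeasureTheory.ofReal_integral_eq_lintegral_ofReal
        (hgint.mono_set (Set.Icc_subset_Icc le_rfl hmintb))
        ((ae_restrict_iff' measurableSet_Icc).2 (Filter.Eventually.of_forall
          (fun v hv => hgnn v ⟨hv.1, hv.2.trans hmintb⟩)))]
      rw [MeasureTheory.integral_Icc_eq_integral_Ioc,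
        ← intervalIntegral.integral_of_le hamin]
    · have hset : Set.Iic t ∩ Set.Icc a b = ∅ := by
        ext v; simp only [Set.mem_inter_iff, Set.mem_Iic, Set.mem_Icc, Set.mem_empty_iff_false,
          iff_false, not_and]
        intro h1 h2; push_neg at h; linarith
      rw [hset, Measure.restrict_empty, lintegral_zero_measure]
  -- μ is a probability measure
  have hμIic : ∀ t : ℝ, μ (Set.Iic t) =
      if a ≤ t then ENNReal.ofReal (F (min t b)) else 0 := by
    intro t
    rw [hμ, key f hfint hfnn t]
    split_ifs with h
    · rw [hFTC (min t b) (le_min h hab.le) (min_le_right _ _)]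
    · rfl
  have hμuniv : μ Set.univ = 1 := by
    rw [hμ, withDensity_apply _ MeasurableSet.univ, Measure.restrict_univ,
      ← MeasureTheory.ofReal_integral_eq_lintegral_ofReal hfint
        ((ae_restrict_iff' measurableSet_Icc).2 (Filter.Eventually.of_forall hfnn))]
    rw [MeasureTheory.integral_Icc_eq_integral_Ioc, ← intervalIntegral.integral_of_le hab.le,
      hFTC b hab.le le_rfl, hFb, ENNReal.ofReal_one]
  haveI hprob : IsProbabilityMeasure μ := ⟨hμuniv⟩
  -- the maximum function
  haveI : Nonempty (Fin n) := ⟨⟨0, by omega⟩⟩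
  set m : (Fin n → ℝ) → ℝ := fun V => Finset.univ.sup' Finset.univ_nonempty V with hmdef
  have hm : Measurable m := by
    have : m = Finset.sup' Finset.univ Finset.univ_nonempty (fun i (v : Fin n → ℝ) => v i) := by
      ext V; rw [Finset.sup'_apply]
    rw [this]
    exact Finset.measurable_sup' _ (fun i _ => measurable_pi_apply i)
  set π : Measure (Fin n → ℝ) := Measure.pi (fun _ : Fin n => μ) with hπdef
  set ρ : Measure ℝ := (volume.restrict (Set.Icc a b)).withDensity
    (fun v => ENNReal.ofReal ((n:ℝ) * F v ^ (n - 1) * f v)) with hρdef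
  have hρIic : ∀ t : ℝ, ρ (Set.Iic t) =
      if a ≤ t then ENNReal.ofReal (F (min t b) ^ n) else 0 := by
    intro t
    rw [hρdef, key _ hgint hgnn t]
    split_ifs with h
    · rw [hFTC2 (min t b) (le_min h hab.le) (min_le_right _ _)]
    · rfl
  haveI : IsProbabilityMeasure (π.map m) := Measure.isProbabilityMeasure_map hm.aemeasurable
  have hmap : π.map m = ρ := by
    refine Measure.ext_of_Iic _ _ (fun t => ?_)
    rw [Measure.map_apply hm measurableSet_Iic]
    have hpre : m ⁻¹' Set.Iic t = Set.univ.pi (fun _ : Fin n => Set.Iic t) := by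
      ext V
      simp [hmdef, Finset.sup'_le_iff, Pi.le_def]
    rw [hpre, hπdef, Measure.pi_pi, hρIic t]
    simp only [hμIic t]
    split_ifs with h
    · rw [Finset.prod_const, Finset.card_univ, Fintype.card_fin,
        ← ENNReal.ofReal_pow (hF0 _ ⟨le_min h hab.le, min_le_right _ _⟩)]
    · simp [zero_pow hnne]
  -- integrability facts
  have hψf_eq : ∀ v ∈ Set.Icc a b,
      ψ v * f v = v * F v ^ (n - 1) * f v - (1 - F v ^ n) / (n:ℝ) := by
    intro v hv
    have hf0 : f v ≠ 0 := (hfpos v hv).ne'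
    rw [hψ v]
    field_simp
  have hJint : IntegrableOn
      (fun v => v * F v ^ (n - 1) * f v - (1 - F v ^ n) / (n:ℝ)) (Set.Icc a b) volume := by
    refine Integrable.sub ?_ ?_
    · refine Integrable.bdd_mul (c := |a| + |b|) hfint
        ((continuous_id.mul (hFcont.pow (n-1))).aestronglyMeasurable) ?_
      refine (ae_restrict_iff' measurableSet_Icc).2 (Filter.Eventually.of_forall fun v hv => ?_)
      have h1 : |v| ≤ |a| + |b| := by
        rw [abs_le]
        constructor
        · calc -(|a| + |b|) ≤ -|a| := by linarith [abs_nonneg b]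
            _ ≤ a := neg_abs_le a
            _ ≤ v := hv.1
        · calc v ≤ b := hv.2
            _ ≤ |b| := le_abs_self b
            _ ≤ |a| + |b| := by linarith [abs_nonneg a]
      have h2 : |F v ^ (n-1)| ≤ 1 := by
        rw [abs_of_nonneg (pow_nonneg (hF0 v hv) _)]
        exact pow_le_one₀ (hF0 v hv) (hF1 v hv)
      calc ‖v * F v ^ (n-1)‖ = |v| * |F v ^ (n-1)| := abs_mul _ _
        _ ≤ (|a| + |b|) * 1 := mul_le_mul h1 h2 (abs_nonneg _) (by positivity)
        _ = |a| + |b| := mul_one _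
    · exact ((continuous_const.sub (hFcont.pow n)).div_const (n:ℝ)).integrableOn_Icc
  have hψfint : IntegrableOn (fun v => ψ v * f v) (Set.Icc a b) volume :=
    hJint.congr ((ae_restrict_iff' measurableSet_Icc).2
      (Filter.Eventually.of_forall fun v hv => (hψf_eq v hv).symm))
  have hψpfint : IntegrableOn
      (fun v => max (ψ v) 0 * ((n:ℝ) * F v ^ (n - 1) * f v)) (Set.Icc a b) volume := by
    refine Integrable.mono (hψfint.const_mul (n:ℝ))
      (((hψmeas.max measurable_const).mul
        ((measurable_const.mul (hFcont.measurable.pow_const _)).mul hfmeas)).aestronglyMeasurable)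
      ?_
    refine (ae_restrict_iff' measurableSet_Icc).2 (Filter.Eventually.of_forall fun v hv => ?_)
    have e1 : ‖max (ψ v) 0 * ((n:ℝ) * F v ^ (n-1) * f v)‖
        = max (ψ v) 0 * ((n:ℝ) * F v ^ (n-1) * f v) :=
      abs_of_nonneg (mul_nonneg (le_max_right _ _) (hgnn v hv))
    have e2 : ‖(n:ℝ) * (ψ v * f v)‖ = (n:ℝ) * (|ψ v| * f v) := by
      rw [Real.norm_eq_abs, abs_mul, abs_mul, abs_of_nonneg hn0.le, abs_of_nonneg (hfnn v hv)]
    rw [e1, e2]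
    have hF1' : F v ^ (n-1) ≤ 1 := pow_le_one₀ (hF0 v hv) (hF1 v hv)
    have hmx : max (ψ v) 0 ≤ |ψ v| := max_le (le_abs_self _) (abs_nonneg _)
    calc max (ψ v) 0 * ((n:ℝ) * F v ^ (n-1) * f v)
        ≤ |ψ v| * ((n:ℝ) * F v ^ (n-1) * f v) :=
          mul_le_mul_of_nonneg_right hmx (hgnn v hv)
      _ ≤ |ψ v| * ((n:ℝ) * 1 * f v) :=
          mul_le_mul_of_nonneg_left
            (mul_le_mul_of_nonneg_right
              (mul_le_mul_of_nonneg_left hF1' hn0.le) (hfnn v hv)) (abs_nonneg _)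
      _ = (n:ℝ) * (|ψ v| * f v) := by ring
  have hψρint : Integrable (fun v => max (ψ v) 0) ρ := by
    rw [hρdef, integrable_withDensity_iff
      (((measurable_const.fun_mul (hFcont.measurable.pow_const _)).fun_mul hfmeas).ennreal_ofReal)
      (Filter.Eventually.of_forall fun v => ENNReal.ofReal_lt_top)]
    refine hψpfint.congr ((ae_restrict_iff' measurableSet_Icc).2
      (Filter.Eventually.of_forall fun v hv => ?_))
    simp [ENNReal.toReal_ofReal (hgnn v hv)]
  have hπint : Integrable (fun V => max (ψ (m V)) 0) π := by
    have h := (integrable_map_measure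
      ((hψmeas.max measurable_const).aestronglyMeasurable) hm.aemeasurable).1
      (by rw [hmap]; exact hψρint)
    exact h
  -- a.e. all coordinates lie in [a,b]
  have hμcompl : μ (Set.Icc a b)ᶜ = 0 := by
    rw [hμ, withDensity_apply _ measurableSet_Icc.compl,
      Measure.restrict_restrict measurableSet_Icc.compl, Set.compl_inter_self,
      Measure.restrict_empty, lintegral_zero_measure]
  have hael : ∀ᵐ V ∂π, ∀ i, V i ∈ Set.Icc a b := by
    rw [MeasureTheory.ae_all_iff]
    intro i
    rw [ae_iff]
    have hset : {V : Fin n → ℝ | ¬ V i ∈ Set.Icc a b}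
        = Function.eval i ⁻¹' (Set.Icc a b)ᶜ := rfl
    rw [hset, hπdef]
    exact Measure.pi_eval_preimage_null _ hμcompl
  -- the pointwise bound
  have hbound : ∀ᵐ V ∂π, (∑ i, x V i * ψ (V i)) ≤ max (ψ (m V)) 0 := by
    filter_upwards [hael] with V hV
    have hle : ∀ i, V i ≤ m V := by
      intro i
      simp only [hmdef]
      exact Finset.le_sup' _ (Finset.mem_univ i)
    have hmV : m V ∈ Set.Icc a b := by
      constructor
      · exact le_trans (hV (Classical.arbitrary _)).1 (hle _)
      · simp only [hmdef]
        exact Finset.sup'_le _ _ (fun i _ => (hV i).2)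
    calc ∑ i, x V i * ψ (V i) ≤ ∑ i, x V i * max (ψ (m V)) 0 := by
          refine Finset.sum_le_sum (fun i _ => ?_)
          refine mul_le_mul_of_nonneg_left ?_ (hx_range V i).1
          exact le_trans (hreg (hV i) hmV (hle i)) (le_max_left _ _)
      _ = (∑ i, x V i) * max (ψ (m V)) 0 := (Finset.sum_mul _ _ _).symm
      _ ≤ max (ψ (m V)) 0 := mul_le_of_le_one_left (le_max_right _ _) (hx_sum V)
  -- right-hand side is nonnegative
  have hRHSnn : 0 ≤ (n:ℝ) * ∫ v in r..b, ψ v * F v ^ (n - 1) * f v := by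
    apply mul_nonneg hn0.le
    rw [intervalIntegral.integral_of_le hrb]
    refine setIntegral_nonneg measurableSet_Ioc (fun v hv => ?_)
    have hvm : v ∈ Set.Icc a b := ⟨hra.trans hv.1.le, hv.2⟩
    exact mul_nonneg (mul_nonneg (hψpos v hv.1 hv.2) (pow_nonneg (hF0 v hvm) _)) (hfnn v hvm)
  by_cases hLint : Integrable (fun V => ∑ i, x V i * ψ (V i)) π
  · have h1 := integral_mono_ae hLint hπint hbound
    have h2 : ∫ V, max (ψ (m V)) 0 ∂π = ∫ y, max (ψ y) 0 ∂ρ := by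
      rw [← hmap, integral_map hm.aemeasurable
        ((hψmeas.max measurable_const).aestronglyMeasurable)]
    have h3 : ∫ y, max (ψ y) 0 ∂ρ
        = ∫ v in Set.Icc a b, max (ψ v) 0 * ((n:ℝ) * F v ^ (n - 1) * f v) := by
      rw [hρdef]
      have hd : (fun v => ENNReal.ofReal ((n:ℝ) * F v ^ (n - 1) * f v))
          = fun v => ((((n:ℝ) * F v ^ (n - 1) * f v).toNNReal : ℝ≥0) : ℝ≥0∞) := rfl
      rw [hd, integral_withDensity_eq_integral_smul
        (((measurable_const.fun_mul (hFcont.measurable.pow_const _)).fun_mul hfmeas).real_toNNReal) _]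
      refine setIntegral_congr_ae measurableSet_Icc
        (Filter.Eventually.of_forall fun v hv => ?_)
      simp only [NNReal.smul_def, smul_eq_mul]
      rw [Real.coe_toNNReal _ (hgnn v hv), mul_comm]
    have h4 : ∫ v in Set.Icc a b, max (ψ v) 0 * ((n:ℝ) * F v ^ (n - 1) * f v)
        = ∫ v in Set.Icc a b,
            Set.indicator (Set.Ioc r b) (fun v => ψ v * ((n:ℝ) * F v ^ (n - 1) * f v)) v := by
      refine setIntegral_congr_ae measurableSet_Icc ?_
      have hne : ∀ᵐ v : ℝ ∂volume, v ≠ r := by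
        have hs : {v : ℝ | ¬ v ≠ r} = {r} := by ext v; simp
        rw [ae_iff, hs]
        exact measure_singleton r
      filter_upwards [hne] with v hvr hv
      rcases lt_or_gt_of_ne hvr with h | h
      · have hneg := hψneg v hv.1 h
        rw [Set.indicator_of_notMem (by
          simp only [Set.mem_Ioc, not_and]
          intro h'; linarith), max_eq_right hneg.le, zero_mul]
      · rw [Set.indicator_of_mem (Set.mem_Ioc.mpr ⟨h, hv.2⟩), max_eq_left (hψpos v h hv.2)]
    have h5 : ∫ v in Set.Icc a b,
          Set.indicator (Set.Ioc r b) (fun v => ψ v * ((n:ℝ) * F v ^ (n - 1) * f v)) v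
        = ∫ v in Set.Ioc r b, ψ v * ((n:ℝ) * F v ^ (n - 1) * f v) := by
      rw [setIntegral_indicator measurableSet_Ioc,
        Set.inter_eq_self_of_subset_right (fun v hv => Set.mem_Icc.mpr
          ⟨hra.trans (Set.mem_Ioc.mp hv).1.le, (Set.mem_Ioc.mp hv).2⟩)]
    have h6 : ∫ v in Set.Ioc r b, ψ v * ((n:ℝ) * F v ^ (n - 1) * f v)
        = (n:ℝ) * ∫ v in r..b, ψ v * F v ^ (n - 1) * f v := by
      rw [← intervalIntegral.integral_of_le hrb, ← intervalIntegral.integral_const_mul]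
      exact intervalIntegral.integral_congr (fun v _ => by ring)
    rw [h2, h3, h4, h5, h6] at h1
    exact h1
  · rw [integral_undef hLint]
    exact hRHSnn
end

section
/- If the hazard rate h(z) = f(z)/(1 − F(z)) is nondecreasing on [a,b), then for any z_1 ≤ z_2 in [a,b) such that ψ_n(z) ≥ 0 for all z ∈ [z_1, z_2], one has ψ_n(z_1) ≤ ψ_n(z_2); that is, over any interval of values on which ψ_n is nonnegative, ψ_n is monotone nondecreasing. -/
open MeasureTheory

private lemma geom_id' (x : ℝ) (n : ℕ) :
    1 - x ^ n = (1 - x) * ∑ k ∈ Finset.range n, x ^ k := by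
  linear_combination geom_sum_mul x n

private lemma sum_pow_ineq (n : ℕ) {x y : ℝ} (hx : 0 ≤ x) (hxy : x ≤ y) :
    (∑ k ∈ Finset.range n, y ^ k) * x ^ (n - 1) ≤
      (∑ k ∈ Finset.range n, x ^ k) * y ^ (n - 1) := by
  have hy : 0 ≤ y := hx.trans hxy
  rw [Finset.sum_mul, Finset.sum_mul]
  apply Finset.sum_le_sum
  intro k hk
  rw [Finset.mem_range] at hk
  have hk' : n - 1 = k + (n - 1 - k) := by omega
  rw [hk', pow_add, pow_add]
  calc y ^ k * (x ^ k * x ^ (n - 1 - k)) = x ^ k * (y ^ k * x ^ (n - 1 - k)) := by ring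
    _ ≤ x ^ k * (y ^ k * y ^ (n - 1 - k)) := by
        apply mul_le_mul_of_nonneg_left _ (pow_nonneg hx k)
        exact mul_le_mul_of_nonneg_left (pow_le_pow_left₀ hx hxy _) (pow_nonneg hy k)

private lemma key_ineq (n : ℕ) (x y g h z₁ z₂ : ℝ)
    (hx : 0 < x) (hxy : x ≤ y) (hy1 : y < 1) (hg : 0 < g) (hh : 0 < h)
    (hn0 : (0 : ℝ) < (n : ℝ))
    (hhaz : g * (1 - y) ≤ h * (1 - x)) (h12 : z₁ ≤ z₂)
    (hpos : 0 ≤ z₁ * x ^ (n - 1) - (1 - x ^ n) / (n * g)) :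
    z₁ * x ^ (n - 1) - (1 - x ^ n) / (n * g) ≤
      z₂ * y ^ (n - 1) - (1 - y ^ n) / (n * h) := by
  have hy : 0 < y := hx.trans_le hxy
  have hP1 : (0 : ℝ) < x ^ (n - 1) := pow_pos hx _
  have hP2 : (0 : ℝ) < y ^ (n - 1) := pow_pos hy _
  have hP12 : x ^ (n - 1) ≤ y ^ (n - 1) := pow_le_pow_left₀ hx.le hxy _
  have hS1pos : (0 : ℝ) < ∑ k ∈ Finset.range n, x ^ k := by
    have : (0:ℝ) < n := hn0
    have hn' : 0 < n := by exact_mod_cast this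
    apply Finset.sum_pos (fun k _ => pow_pos hx k) ⟨0, Finset.mem_range.mpr hn'⟩
  have hS2nn : (0 : ℝ) ≤ ∑ k ∈ Finset.range n, y ^ k :=
    Finset.sum_nonneg fun k _ => (pow_pos hy k).le
  have hSP := sum_pow_ineq n hx.le hxy
  -- key: c2 ≤ c1
  have hc : (1 - y ^ n) / (n * h) / y ^ (n - 1) ≤ (1 - x ^ n) / (n * g) / x ^ (n - 1) := by
    rw [div_div, div_div, div_le_div_iff₀ (by positivity) (by positivity)]
    rw [geom_id' x n, geom_id' y n]
    have hmm := mul_le_mul hSP hhaz (mul_nonneg hg.le (by linarith))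
      (mul_nonneg hS1pos.le hP2.le)
    nlinarith [mul_le_mul_of_nonneg_left hmm hn0.le]
  have hψ1 : z₁ * x ^ (n - 1) - (1 - x ^ n) / (n * g)
      = x ^ (n - 1) * (z₁ - (1 - x ^ n) / (n * g) / x ^ (n - 1)) := by
    field_simp
  have hψ2 : z₂ * y ^ (n - 1) - (1 - y ^ n) / (n * h)
      = y ^ (n - 1) * (z₂ - (1 - y ^ n) / (n * h) / y ^ (n - 1)) := by
    field_simp
  rw [hψ1] at hpos ⊢
  rw [hψ2]
  have hu1 : 0 ≤ z₁ - (1 - x ^ n) / (n * g) / x ^ (n - 1) := by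
    nlinarith [hpos, hP1]
  exact mul_le_mul hP12 (by linarith) hu1 hP2.le

/-- **MHR implies the virtual value for maximum payment is nondecreasing
wherever it is nonnegative.**  `n ≥ 2` agents have values drawn i.i.d. from a
distribution with continuous, strictly increasing cdf `F`, density `f`
positive on the support `[a,b]`, `F a = 0`, `F b = 1`.  If the hazard rate
`h(z) = f z / (1 - F z)` is nondecreasing on `[a, b)`, then for any
`z₁ ≤ z₂` in `[a, b)` such that `ψ_n(z) ≥ 0` for all `z ∈ [z₁, z₂]`, where
`ψ_n(z) = z * F z ^ (n-1) - (1 - F z ^ n)/(n * f z)`, we have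
`ψ_n z₁ ≤ ψ_n z₂`. -/
theorem mhr_virtual_value_monotone_on_nonneg
    (n : ℕ) (hn : 2 ≤ n) (a b : ℝ) (hab : a < b)
    (F f : ℝ → ℝ)
    (hFcont : Continuous F)
    (hFmono : StrictMonoOn F (Set.Icc a b))
    (hFa : F a = 0) (hFb : F b = 1)
    (hfpos : ∀ x ∈ Set.Icc a b, 0 < f x)
    (hderiv : ∀ x ∈ Set.Icc a b, HasDerivAt F (f x) x)
    (ψ : ℝ → ℝ)
    (hψ : ∀ v, ψ v = v * F v ^ (n - 1) - (1 - F v ^ n) / (n * f v))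
    (hMHR : MonotoneOn (fun z => f z / (1 - F z)) (Set.Ico a b))
    (z₁ z₂ : ℝ) (hz₁ : z₁ ∈ Set.Ico a b) (hz₂ : z₂ ∈ Set.Ico a b)
    (h12 : z₁ ≤ z₂)
    (hnonneg : ∀ z ∈ Set.Icc z₁ z₂, 0 ≤ ψ z) :
    ψ z₁ ≤ ψ z₂ := by
  have hz₁I : z₁ ∈ Set.Icc a b := ⟨hz₁.1, hz₁.2.le⟩
  have hz₂I : z₂ ∈ Set.Icc a b := ⟨hz₂.1, hz₂.2.le⟩
  have hf₁ := hfpos z₁ hz₁I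
  have hf₂ := hfpos z₂ hz₂I
  have hn0 : (0 : ℝ) < (n : ℝ) := by
    have : 0 < n := by omega
    exact_mod_cast this
  rcases eq_or_lt_of_le hz₁.1 with heq | hlt
  · -- z₁ = a : then ψ z₁ < 0, contradicting nonnegativity
    exfalso
    have hF0 : F z₁ = 0 := by rw [← heq, hFa]
    have h1 : 1 ≤ n - 1 := by omega
    have hψ1 : ψ z₁ = -(1 / (n * f z₁)) := by
      rw [hψ z₁, hF0, zero_pow (by omega : n - 1 ≠ 0), zero_pow (by omega : n ≠ 0)]
      ring
    have hpos := hnonneg z₁ ⟨le_rfl, h12⟩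
    rw [hψ1] at hpos
    have : 0 < 1 / ((n : ℝ) * f z₁) := by positivity
    linarith
  · -- a < z₁
    have hF₁pos : 0 < F z₁ := by
      have := hFmono ⟨le_rfl, hab.le⟩ hz₁I hlt
      rwa [hFa] at this
    have hF₁₂ : F z₁ ≤ F z₂ := hFmono.monotoneOn hz₁I hz₂I h12
    have hF₂lt : F z₂ < 1 := by
      have := hFmono hz₂I ⟨hab.le, le_rfl⟩ hz₂.2
      rwa [hFb] at this
    have hF₁lt : F z₁ < 1 := lt_of_le_of_lt hF₁₂ hF₂lt
    have hhaz : f z₁ * (1 - F z₂) ≤ f z₂ * (1 - F z₁) := by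
      have := hMHR hz₁ hz₂ h12
      rw [div_le_div_iff₀ (by linarith) (by linarith)] at this
      linarith
    have hpos := hnonneg z₁ ⟨le_rfl, h12⟩
    rw [hψ z₁] at hpos
    rw [hψ z₁, hψ z₂]
    exact key_ineq n (F z₁) (F z₂) (f z₁) (f z₂) z₁ z₂ hF₁pos hF₁₂ hF₂lt
      hf₁ hf₂ hn0 hhaz h12 hpos
end

section
/- Suppose the hazard rate h(z) = f(z)/(1 − F(z)) is nondecreasing on [a,b). Then the set { z ∈ [a,b] : ψ_n(z) ≥ 0 } is an interval [r, b], and for every measurable allocation rule x : [a,b]^n → [0,1]^n with Σ_{i=1}^n x_i(v) ≤ 1 for all v, E_{V ~ F^{⊗n}}[ Σ_{i=1}^n x_i(V)·ψ_n(V_i) ] ≤ n·∫_r^b ψ_n(v)·F(v)^{n-1}·f(v) dv. (Hence for MHR distributions the optimal all-pay auction is a highest-bid-wins auction with a reserve price.) -/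
open MeasureTheory Finset
open scoped ENNReal NNReal

set_option maxHeartbeats 1000000

section AuxLemmas
set_option maxHeartbeats 1000000 in

lemma psi_step (n : ℕ) (hn : 2 ≤ n) (a b : ℝ) (hab : a < b) (ha : 0 ≤ a)
    (F f : ℝ → ℝ) (hFmono : StrictMonoOn F (Set.Icc a b)) (hFa : F a = 0) (hFb : F b = 1)
    (hfpos : ∀ x ∈ Set.Icc a b, 0 < f x)
    (hMHR : MonotoneOn (fun z => f z / (1 - F z)) (Set.Ico a b))
    (ψ : ℝ → ℝ) (hψ : ∀ v, ψ v = v * F v ^ (n-1) - (1 - F v ^ n)/(n * f v)) :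
    ∀ y ∈ Set.Icc a b, ∀ z ∈ Set.Icc a b, y ≤ z → 0 ≤ ψ y → ψ y ≤ ψ z := by
  intro y hy z hz hyz hψy
  have hnR : (0:ℝ) < n := by positivity
  have hfy := hfpos y hy
  have hfz := hfpos z hz
  have hcy : (0:ℝ) < n * f y := by positivity
  have hcz : (0:ℝ) < n * f z := by positivity
  -- basic facts about F
  have hF0 : ∀ w ∈ Set.Icc a b, 0 ≤ F w := by
    intro w hw
    rcases eq_or_lt_of_le hw.1 with h | h
    · simp [← h, hFa]
    · have := hFmono (Set.left_mem_Icc.2 hab.le) hw h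
      rw [hFa] at this; linarith
  have hF1 : ∀ w ∈ Set.Icc a b, F w ≤ 1 := by
    intro w hw
    rcases eq_or_lt_of_le hw.2 with h | h
    · simp [h, hFb]
    · have := hFmono hw (Set.right_mem_Icc.2 hab.le) h
      rw [hFb] at this; linarith
  have hy0 : 0 ≤ y := le_trans ha hy.1
  -- ψ y ≤ y
  have hψyle : ψ y ≤ y := by
    rw [hψ y]
    have h1 : F y ^ (n-1) ≤ 1 := pow_le_one₀ (hF0 y hy) (hF1 y hy)
    have h2 : 0 ≤ (1 - F y ^ n) / (n * f y) := by
      apply div_nonneg _ hcy.le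
      have : F y ^ n ≤ 1 := pow_le_one₀ (hF0 y hy) (hF1 y hy)
      linarith
    nlinarith [pow_nonneg (hF0 y hy) (n-1)]
  -- case z = b
  rcases eq_or_lt_of_le hz.2 with hzb | hzb
  · have hb : ψ b = b := by rw [hψ b, hFb]; simp
    rw [hzb, hb]
    linarith [hy.2]
  -- now z < b
  have hay : a < y := by
    rcases eq_or_lt_of_le hy.1 with h | h
    · exfalso
      have hfa := hfpos a (Set.left_mem_Icc.2 hab.le)
      have hψa : ψ a = -(1 / (n * f a)) := by
        rw [hψ a, hFa, zero_pow (by omega : n - 1 ≠ 0), zero_pow (by omega : n ≠ 0)]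
        ring
      have h2 : 0 < 1 / ((n:ℝ) * f a) := by positivity
      rw [← h] at hψy
      rw [hψa] at hψy; linarith
    · exact h
  have hyIco : y ∈ Set.Ico a b := ⟨hy.1, lt_of_le_of_lt hyz hzb⟩
  have hzIco : z ∈ Set.Ico a b := ⟨hz.1, hzb⟩
  have ht0 : 0 < F y := by
    have := hFmono (Set.left_mem_Icc.2 hab.le) hy hay
    rw [hFa] at this; linarith
  have hts : F y ≤ F z := by
    rcases eq_or_lt_of_le hyz with h | h
    · rw [h]
    · exact (hFmono hy hz h).le
  have hs1 : F z < 1 := by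
    have := hFmono hz (Set.right_mem_Icc.2 hab.le) hzb
    rw [hFb] at this; linarith
  have ht1 : F y < 1 := lt_of_le_of_lt hts hs1
  -- MHR crossed
  have hmhr : (1 - F z) * f y ≤ (1 - F y) * f z := by
    have h := hMHR hyIco hzIco hyz
    simp only at h
    rw [div_le_div_iff₀ (by linarith) (by linarith)] at h
    linarith
  obtain ⟨Sy, hSy⟩ : ∃ S : ℝ, S = ∑ k ∈ range n, F y ^ k := ⟨_, rfl⟩
  obtain ⟨Sz, hSz⟩ : ∃ S : ℝ, S = ∑ k ∈ range n, F z ^ k := ⟨_, rfl⟩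
  have hgeomy : 1 - F y ^ n = (1 - F y) * Sy := by
    have := geom_sum_mul (F y) n
    rw [hSy]; nlinarith [this]
  have hgeomz : 1 - F z ^ n = (1 - F z) * Sz := by
    have := geom_sum_mul (F z) n
    rw [hSz]; nlinarith [this]
  have hSy0 : 0 < Sy := by
    rw [hSy]
    exact Finset.sum_pos (fun k _ => pow_pos ht0 k) (by simp; omega)
  have hSyz : Sy ≤ Sz := by
    rw [hSy, hSz]
    exact Finset.sum_le_sum fun k _ => pow_le_pow_left₀ ht0.le hts k
  have hSz0 : 0 < Sz := lt_of_lt_of_le hSy0 hSyz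
  -- ψ y ≥ 0, cleared of denominators
  have hG1 : (1 - F y) * Sy ≤ y * F y ^ (n-1) * (n * f y) := by
    rw [hψ y, hgeomy, sub_nonneg, div_le_iff₀ hcy] at hψy
    linarith
  -- key sum inequality
  have hkey : F y ^ (n-1) * Sz ≤ F z ^ (n-1) * Sy := by
    rw [hSy, hSz, Finset.mul_sum, Finset.mul_sum]
    apply Finset.sum_le_sum
    intro k hk
    have hk' : k ≤ n - 1 := by simp at hk; omega
    have hdecomp : n - 1 = k + (n - 1 - k) := by omega
    rw [hdecomp, pow_add, pow_add]
    have h1 : F y ^ (n-1-k) ≤ F z ^ (n-1-k) := pow_le_pow_left₀ ht0.le hts _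
    have h2 : (0:ℝ) ≤ F y ^ k := pow_nonneg ht0.le k
    have h3 : (0:ℝ) ≤ F z ^ k := le_trans h2 (pow_le_pow_left₀ ht0.le hts k)
    calc F y ^ k * F y ^ (n-1-k) * F z ^ k
        ≤ F y ^ k * F z ^ (n-1-k) * F z ^ k := by
          have h4 := mul_le_mul_of_nonneg_left h1 (mul_nonneg h2 h3)
          linarith [h4]
      _ = F z ^ k * F z ^ (n-1-k) * F y ^ k := by ring
  have hT0 : (0:ℝ) ≤ F y ^ (n-1) := pow_nonneg ht0.le _
  have hS0 : (0:ℝ) ≤ F z ^ (n-1) := pow_nonneg (le_trans ht0.le hts) _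
  have hC : y * (F y ^ (n-1) * Sz) ≤ z * (F z ^ (n-1) * Sy) := by
    calc y * (F y ^ (n-1) * Sz) ≤ y * (F z ^ (n-1) * Sy) := by nlinarith
      _ ≤ z * (F z ^ (n-1) * Sy) := by nlinarith [mul_nonneg hS0 hSy0.le]
  have u1 : (1 - F z)*Sz/(n*f z) ≤ (1 - F y)*Sz/(n*f y) := by
    rw [div_le_div_iff₀ hcz hcy]
    nlinarith [mul_le_mul_of_nonneg_left hmhr (mul_nonneg hnR.le hSz0.le)]
  have u2 : (1 - F y)*(Sz - Sy)/(n*f y) ≤ y * F y ^ (n-1) * (Sz-Sy)/Sy := by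
    rw [div_le_div_iff₀ hcy hSy0]
    nlinarith [mul_le_mul_of_nonneg_right hG1 (sub_nonneg.2 hSyz)]
  have u3 : y * F y ^ (n-1) * (Sz-Sy)/Sy ≤ z * F z ^ (n-1) - y * F y ^ (n-1) := by
    rw [div_le_iff₀ hSy0]
    nlinarith [hC]
  have esplit : (1 - F y)*Sz/(↑n*f y) = (1 - F y)*Sy/(↑n*f y) + (1 - F y)*(Sz-Sy)/(↑n*f y) := by
    field_simp
    ring
  rw [hψ y, hψ z, hgeomy, hgeomz]
  linarith [u1, u2, u3, esplit]


lemma fubini_term {m : ℕ} (μ : Measure ℝ) [IsProbabilityMeasure μ] (g : ℝ → ℝ)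
    (hg : Measurable g) (C : ℝ) (hbd : ∀ᵐ v ∂μ, |g v| ≤ C) (i : Fin (m+1)) :
    ∫ V, g (V i) * ∏ j, (if V j ≤ V i then (1:ℝ) else 0)
        ∂(Measure.pi fun _ : Fin (m+1) => μ)
      = ∫ v, g v * (μ (Set.Iic v)).toReal ^ m ∂μ := by
  classical
  have hμfin : ∀ s : Set ℝ, μ s ≠ ⊤ := fun s => (measure_lt_top μ s).ne
  set ν : Measure (Fin m → ℝ) := Measure.pi fun _ : Fin m => μ with hν
  haveI : IsProbabilityMeasure ν := by infer_instance
  set G : ℝ × (Fin m → ℝ) → ℝ :=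
    fun p => g p.1 * ∏ k, (if p.2 k ≤ p.1 then (1:ℝ) else 0) with hG
  have hmp := (measurePreserving_piFinSuccAbove (fun _ : Fin (m+1) => μ) i).symm
  have hcomp : ∀ p : ℝ × (Fin m → ℝ),
      g ((MeasurableEquiv.piFinSuccAbove (fun _ : Fin (m+1) => ℝ) i).symm p i) *
        ∏ j, (if (MeasurableEquiv.piFinSuccAbove (fun _ : Fin (m+1) => ℝ) i).symm p j ≤
          (MeasurableEquiv.piFinSuccAbove (fun _ : Fin (m+1) => ℝ) i).symm p i then (1:ℝ) else 0)
        = G p := by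
    intro p
    simp only [MeasurableEquiv.piFinSuccAbove_symm_apply, Fin.insertNthEquiv, Equiv.coe_fn_mk,
      Fin.insertNth_apply_same]
    rw [Fin.prod_univ_succAbove (fun j : Fin (m+1) =>
      if (Fin.insertNth (α := fun _ => ℝ) i p.1 p.2) j ≤ p.1 then (1:ℝ) else 0) i]
    simp [Fin.insertNth_apply_same, Fin.insertNth_apply_succAbove, hG]
  have step1 : ∫ V, g (V i) * ∏ j, (if V j ≤ V i then (1:ℝ) else 0)
      ∂(Measure.pi fun _ : Fin (m+1) => μ) = ∫ p, G p ∂(μ.prod ν) := by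
    rw [← hmp.integral_comp'
      (fun V => g (V i) * ∏ j, (if V j ≤ V i then (1:ℝ) else 0))]
    exact integral_congr_ae (Filter.Eventually.of_forall fun p => hcomp p)
  -- measurability of G
  have hGmeas : Measurable G := by
    apply Measurable.mul (hg.comp measurable_fst)
    apply Finset.measurable_prod
    intro k _
    exact Measurable.ite
      (measurableSet_le (measurable_snd.eval) measurable_fst)
      measurable_const measurable_const
  -- integrability of G
  have haefst : ∀ᵐ p ∂(μ.prod ν), |g p.1| ≤ C :=
    Measure.quasiMeasurePreserving_fst.tendsto_ae.eventually hbd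
  have hGint : Integrable G (μ.prod ν) := by
    refine Integrable.mono (integrable_const C) hGmeas.aestronglyMeasurable ?_
    filter_upwards [haefst] with p hp
    have h1 : |∏ k, (if p.2 k ≤ p.1 then (1:ℝ) else 0)| ≤ 1 := by
      rw [Finset.prod_boole]
      split <;> simp
    have hC0 : 0 ≤ C := le_trans (abs_nonneg _) hp
    rw [Real.norm_eq_abs, Real.norm_eq_abs, abs_mul, abs_of_nonneg hC0]
    nlinarith [abs_nonneg (g p.1)]
  have step2 : ∫ p, G p ∂(μ.prod ν) = ∫ v, g v * (μ (Set.Iic v)).toReal ^ m ∂μ := by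
    rw [integral_prod G hGint]
    apply integral_congr_ae (Filter.Eventually.of_forall fun v => ?_)
    have hinner : ∫ W, G (v, W) ∂ν = g v * (μ (Set.Iic v)).toReal ^ m := by
      simp only [hG]
      rw [integral_const_mul]
      congr 1
      have heq : (fun W : Fin m → ℝ => ∏ k, (if W k ≤ v then (1:ℝ) else 0))
          = (Set.univ.pi fun _ : Fin m => Set.Iic v).indicator (fun _ => (1:ℝ)) := by
        funext W
        rw [Finset.prod_boole, Set.indicator_apply]
        simp [Set.mem_univ_pi, Pi.le_def]
      rw [heq, integral_indicator_const (1:ℝ)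
        (MeasurableSet.univ_pi fun _ => measurableSet_Iic)]
      rw [hν, measureReal_def, Measure.pi_pi]
      simp [ENNReal.toReal_pow]
    exact hinner
  rw [step1, step2]


section
variable (n : ℕ) (a b : ℝ) (F f : ℝ → ℝ)

lemma ftc_lem (hab : a < b)
    (hfcont : ContinuousOn f (Set.Icc a b))
    (hderiv : ∀ x ∈ Set.Icc a b, HasDerivAt F (f x) x) :
    ∀ v ∈ Set.Icc a b, ∫ w in Set.Icc a v, f w = F v - F a := by
  intro v hv
  have hsub : Set.uIcc a v ⊆ Set.Icc a b := by
    rw [Set.uIcc_of_le hv.1]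
    exact Set.Icc_subset_Icc le_rfl hv.2
  have hii : IntervalIntegrable f volume a v :=
    (hfcont.mono hsub).intervalIntegrable
  have := intervalIntegral.integral_eq_sub_of_hasDerivAt
    (fun x hx => hderiv x (hsub hx)) hii
  rw [MeasureTheory.integral_Icc_eq_integral_Ioc, ← intervalIntegral.integral_of_le hv.1, this]

lemma mu_facts (hab : a < b)
    (hFa : F a = 0) (hFb : F b = 1)
    (hfcont : ContinuousOn f (Set.Icc a b))
    (hfpos : ∀ x ∈ Set.Icc a b, 0 < f x)
    (hderiv : ∀ x ∈ Set.Icc a b, HasDerivAt F (f x) x)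
    (μ : Measure ℝ)
    (hμ : μ = (volume.restrict (Set.Icc a b)).withDensity
      (fun v => ENNReal.ofReal (f v))) :
    (∀ v ∈ Set.Icc a b, μ (Set.Iic v) = ENNReal.ofReal (F v)) ∧ μ Set.univ = 1 := by
  have key : ∀ v ∈ Set.Icc a b, μ (Set.Iic v) = ENNReal.ofReal (F v) := by
    intro v hv
    rw [hμ, withDensity_apply _ measurableSet_Iic,
      Measure.restrict_restrict measurableSet_Iic]
    have hset : Set.Iic v ∩ Set.Icc a b = Set.Icc a v := by
      ext w
      simp only [Set.mem_inter_iff, Set.mem_Iic, Set.mem_Icc]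
      constructor
      · rintro ⟨h1, h2, h3⟩; exact ⟨h2, h1⟩
      · rintro ⟨h1, h2⟩; exact ⟨h2, h1, le_trans h2 hv.2⟩
    rw [hset]
    have hsubset : Set.Icc a v ⊆ Set.Icc a b := Set.Icc_subset_Icc le_rfl hv.2
    have hint : IntegrableOn f (Set.Icc a v) volume :=
      (hfcont.mono hsubset).integrableOn_compact isCompact_Icc
    have hnn : 0 ≤ᵐ[volume.restrict (Set.Icc a v)] f := by
      rw [Filter.EventuallyLE, ae_restrict_iff' measurableSet_Icc]
      exact Filter.Eventually.of_forall fun w hw => (hfpos w (hsubset hw)).le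
    rw [← ofReal_integral_eq_lintegral_ofReal hint hnn,
      ftc_lem a b F f hab hfcont hderiv v hv, hFa, sub_zero]
  refine ⟨key, ?_⟩
  have hIicIcc : Set.Iic b ∩ Set.Icc a b = Set.Icc a b := by
    ext w
    simp only [Set.mem_inter_iff, Set.mem_Iic, Set.mem_Icc]
    exact ⟨fun h => h.2, fun h => ⟨h.2, h⟩⟩
  have huniv : μ Set.univ = μ (Set.Iic b) := by
    rw [hμ, withDensity_apply _ MeasurableSet.univ, withDensity_apply _ measurableSet_Iic,
      Measure.restrict_restrict measurableSet_Iic, hIicIcc, setLIntegral_univ]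
  rw [huniv, key b (Set.right_mem_Icc.2 hab.le), hFb, ENNReal.ofReal_one]


end

end AuxLemmas

/-- **For MHR distributions the optimal all-pay auction is highest-bid-wins
with a reserve price.**  `n ≥ 2` agents have values drawn i.i.d. from the
distribution `μ` on `[a, b]` (with `0 ≤ a`) with continuous density `f` and
cdf `F` (continuous, strictly increasing, `F a = 0`, `F b = 1`, `f` positive
on `[a,b]`).  If the hazard rate `h(z) = f z / (1 - F z)` is nondecreasing on
`[a, b)`, then the set `{ z ∈ [a,b] | ψ_n z ≥ 0 }` is an interval `[r, b]`,
where `ψ_n(z) = z * F z ^ (n-1) - (1 - F z ^ n)/(n * f z)`, and every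
measurable allocation rule `x : [a,b]^n → [0,1]^n` with `∑ i, x v i ≤ 1` has
expected virtual surplus at most
`n * ∫ v in r..b, ψ_n v * F v ^ (n-1) * f v`. -/
theorem mhr_optimal_is_reserve_auction
    (n : ℕ) (hn : 2 ≤ n) (a b : ℝ) (hab : a < b) (ha : 0 ≤ a)
    (F f : ℝ → ℝ)
    (hFcont : Continuous F)
    (hFmono : StrictMonoOn F (Set.Icc a b))
    (hFa : F a = 0) (hFb : F b = 1)
    (hfmeas : Measurable f)
    (hfcont : ContinuousOn f (Set.Icc a b))
    (hfpos : ∀ x ∈ Set.Icc a b, 0 < f x)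
    (hderiv : ∀ x ∈ Set.Icc a b, HasDerivAt F (f x) x)
    (ψ : ℝ → ℝ)
    (hψ : ∀ v, ψ v = v * F v ^ (n - 1) - (1 - F v ^ n) / (n * f v))
    (hMHR : MonotoneOn (fun z => f z / (1 - F z)) (Set.Ico a b))
    (μ : Measure ℝ)
    (hμ : μ = (volume.restrict (Set.Icc a b)).withDensity
      (fun v => ENNReal.ofReal (f v))) :
    ∃ r ∈ Set.Icc a b,
      {z ∈ Set.Icc a b | 0 ≤ ψ z} = Set.Icc r b ∧
      ∀ x : (Fin n → ℝ) → Fin n → ℝ,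
        (∀ i, Measurable (fun v => x v i)) →
        (∀ v i, x v i ∈ Set.Icc (0 : ℝ) 1) →
        (∀ v, ∑ i, x v i ≤ 1) →
        ∫ V, (∑ i, x V i * ψ (V i)) ∂(Measure.pi fun _ : Fin n => μ) ≤
          (n : ℝ) * ∫ v in r..b, ψ v * F v ^ (n - 1) * f v := by
  classical
  -- continuity of ψ on [a,b]
  have hψfun : ψ = fun v => v * F v ^ (n - 1) - (1 - F v ^ n) / (n * f v) := funext hψ
  have hψcont : ContinuousOn ψ (Set.Icc a b) := by
    rw [hψfun]
    apply ContinuousOn.sub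
    · exact continuousOn_id.mul ((hFcont.continuousOn).pow _)
    · apply ContinuousOn.div
      · exact continuousOn_const.sub ((hFcont.continuousOn).pow _)
      · exact continuousOn_const.mul hfcont
      · intro w hw
        have := hfpos w hw
        have hn0 : (0:ℝ) < n := by positivity
        positivity
  have hψmeas : Measurable ψ := by
    rw [hψfun]
    exact (measurable_id.mul (hFcont.measurable.pow_const _)).sub
      ((measurable_const.sub (hFcont.measurable.pow_const _)).div
        (measurable_const.mul hfmeas))
  have hψmono := psi_step n hn a b hab ha F f hFmono hFa hFb hfpos hMHR ψ hψ
  have hb0 : (0:ℝ) < b := lt_of_le_of_lt ha hab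
  have hψb : ψ b = b := by rw [hψ b, hFb]; simp
  -- the set S
  set S := {z ∈ Set.Icc a b | 0 ≤ ψ z} with hS
  have hbS : b ∈ S := ⟨Set.right_mem_Icc.2 hab.le, by rw [hψb]; exact hb0.le⟩
  have hSne : S.Nonempty := ⟨b, hbS⟩
  have hSbdd : BddBelow S := ⟨a, fun z hz => hz.1.1⟩
  have hSclosed : IsClosed S := by
    have : S = Set.Icc a b ∩ ψ ⁻¹' Set.Ici 0 := by
      ext z; simp [hS, Set.mem_setOf_eq, Set.mem_preimage, and_comm]
    rw [this]
    exact hψcont.preimage_isClosed_of_isClosed isClosed_Icc isClosed_Ici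
  set r := sInf S with hr
  have hrS : r ∈ S := hSclosed.csInf_mem hSne hSbdd
  have hrIcc : r ∈ Set.Icc a b := hrS.1
  have hSeq : S = Set.Icc r b := by
    ext z
    constructor
    · intro hz
      exact ⟨csInf_le hSbdd hz, hz.1.2⟩
    · intro hz
      have hzIcc : z ∈ Set.Icc a b := ⟨le_trans hrIcc.1 hz.1, hz.2⟩
      refine ⟨hzIcc, ?_⟩
      have := hψmono r hrIcc z hzIcc hz.1 hrS.2
      linarith [hrS.2]
  refine ⟨r, hrIcc, hSeq, ?_⟩
  intro x hxmeas hx01 hxsum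
  -- replace n by m+1
  obtain ⟨m, rfl⟩ : ∃ m, n = m + 1 := ⟨n - 1, by omega⟩
  simp only [Nat.add_sub_cancel] at *
  -- ψ⁺
  set ψp : ℝ → ℝ := fun v => max (ψ v) 0 with hψp
  have hψpmeas : Measurable ψp := hψmeas.max measurable_const
  have hψpnn : ∀ v, 0 ≤ ψp v := fun v => le_max_right _ _
  have hψple : ∀ v, ψ v ≤ ψp v := fun v => le_max_left _ _
  have hψpmono : ∀ y ∈ Set.Icc a b, ∀ z ∈ Set.Icc a b, y ≤ z → ψp y ≤ ψp z := by
    intro y hy z hz hyz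
    rcases le_or_gt 0 (ψ y) with h | h
    · have h2 := hψmono y hy z hz hyz h
      have : ψp y = ψ y := max_eq_left h
      rw [this]
      exact le_trans h2 (hψple z)
    · have : ψp y = 0 := max_eq_right h.le
      rw [this]; exact hψpnn z
  -- bound C
  obtain ⟨C, hC⟩ := isCompact_Icc.exists_bound_of_continuousOn hψcont
  have hCψ : ∀ w ∈ Set.Icc a b, |ψ w| ≤ C := by
    intro w hw; simpa [Real.norm_eq_abs] using hC w hw
  have hC0 : 0 ≤ C := le_trans (abs_nonneg _) (hCψ a (Set.left_mem_Icc.2 hab.le))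
  have hCψp : ∀ w ∈ Set.Icc a b, |ψp w| ≤ C := by
    intro w hw
    rw [abs_of_nonneg (hψpnn w)]
    exact max_le (le_trans (le_abs_self _) (hCψ w hw)) hC0
  -- measure facts
  obtain ⟨hIic, huniv⟩ := mu_facts a b F f hab hFa hFb hfcont hfpos hderiv μ hμ
  haveI hprob : IsProbabilityMeasure μ := ⟨huniv⟩
  have hμcompl : μ (Set.Icc a b)ᶜ = 0 := by
    rw [hμ, withDensity_apply _ measurableSet_Icc.compl,
      Measure.restrict_restrict measurableSet_Icc.compl, Set.compl_inter_self,
      Measure.restrict_empty, lintegral_zero_measure]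
  have hμIcc : μ (Set.Icc a b) = 1 := (prob_compl_eq_zero_iff measurableSet_Icc).1 hμcompl
  have hμae : ∀ᵐ v ∂μ, v ∈ Set.Icc a b := mem_ae_iff.2 hμcompl
  set π : Measure (Fin (m+1) → ℝ) := Measure.pi fun _ : Fin (m+1) => μ with hπ
  haveI : IsProbabilityMeasure π := by rw [hπ]; infer_instance
  -- a.e. all coordinates in the box
  have hbox : ∀ᵐ V ∂π, ∀ i, V i ∈ Set.Icc a b := by
    have hmeas : MeasurableSet (Set.pi Set.univ fun _ : Fin (m+1) => Set.Icc a b) :=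
      MeasurableSet.univ_pi fun _ => measurableSet_Icc
    have h1 : π (Set.pi Set.univ fun _ : Fin (m+1) => Set.Icc a b) = 1 := by
      rw [hπ, Measure.pi_pi]
      simp [hμIcc]
    have h2 := (prob_compl_eq_zero_iff hmeas).2 h1
    have h3 : ∀ᵐ V ∂π, V ∈ Set.pi Set.univ fun _ : Fin (m+1) => Set.Icc a b :=
      mem_ae_iff.2 h2
    filter_upwards [h3] with V hV i
    exact hV i (Set.mem_univ i)
  -- pointwise bound
  have hpt : ∀ V : Fin (m+1) → ℝ, (∀ i, V i ∈ Set.Icc a b) →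
      ∑ i, x V i * ψ (V i) ≤
        ∑ i, ψp (V i) * ∏ j, (if V j ≤ V i then (1:ℝ) else 0) := by
    intro V hV
    obtain ⟨i₀, -, hmax⟩ := Finset.exists_max_image Finset.univ V Finset.univ_nonempty
    have htermnn : ∀ i, 0 ≤ ψp (V i) * ∏ j, (if V j ≤ V i then (1:ℝ) else 0) := by
      intro i
      apply mul_nonneg (hψpnn _)
      rw [Finset.prod_boole]
      split <;> norm_num
    calc ∑ i, x V i * ψ (V i) ≤ ∑ i, x V i * ψp (V i₀) := by
          apply Finset.sum_le_sum
          intro i _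
          have h1 : ψ (V i) ≤ ψp (V i₀) :=
            le_trans (hψple _) (hψpmono _ (hV i) _ (hV i₀) (hmax i (Finset.mem_univ i)))
          exact mul_le_mul_of_nonneg_left h1 (hx01 V i).1
      _ = (∑ i, x V i) * ψp (V i₀) := (Finset.sum_mul _ _ _).symm
      _ ≤ 1 * ψp (V i₀) := mul_le_mul_of_nonneg_right (hxsum V) (hψpnn _)
      _ = ψp (V i₀) * ∏ j, (if V j ≤ V i₀ then (1:ℝ) else 0) := by
          rw [one_mul, Finset.prod_boole,
            if_pos (fun j _ => hmax j (Finset.mem_univ j)), mul_one]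
      _ ≤ ∑ i, ψp (V i) * ∏ j, (if V j ≤ V i then (1:ℝ) else 0) :=
          Finset.single_le_sum (fun i _ => htermnn i) (Finset.mem_univ i₀)
  -- measurability and integrability
  have hLmeas : Measurable fun V : Fin (m+1) → ℝ => ∑ i, x V i * ψ (V i) := by
    apply Finset.measurable_sum
    intro i _
    exact (hxmeas i).mul (hψmeas.comp (measurable_pi_apply i))
  have hLint : Integrable (fun V : Fin (m+1) → ℝ => ∑ i, x V i * ψ (V i)) π := by
    refine Integrable.mono (integrable_const ((m+1 : ℝ) * C)) hLmeas.aestronglyMeasurable ?_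
    filter_upwards [hbox] with V hV
    rw [Real.norm_eq_abs, Real.norm_eq_abs]
    refine le_trans ?_ (le_abs_self _)
    calc |∑ i, x V i * ψ (V i)| ≤ ∑ i, |x V i * ψ (V i)| := Finset.abs_sum_le_sum_abs _ _
      _ ≤ ∑ _i : Fin (m+1), C := by
          apply Finset.sum_le_sum
          intro i _
          rw [abs_mul]
          have h1 : |x V i| ≤ 1 := abs_le.2 ⟨by linarith [(hx01 V i).1], (hx01 V i).2⟩
          have h2 := hCψ _ (hV i)
          nlinarith [abs_nonneg (x V i), abs_nonneg (ψ (V i))]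
      _ = (m+1 : ℝ) * C := by
          rw [Finset.sum_const, Finset.card_univ, Fintype.card_fin, nsmul_eq_mul]
          push_cast; ring
  have htmeas : ∀ i : Fin (m+1), Measurable fun V : Fin (m+1) → ℝ =>
      ψp (V i) * ∏ j, (if V j ≤ V i then (1:ℝ) else 0) := by
    intro i
    apply Measurable.mul (hψpmeas.comp (measurable_pi_apply i))
    apply Finset.measurable_prod
    intro j _
    exact Measurable.ite (measurableSet_le (measurable_pi_apply j) (measurable_pi_apply i))
      measurable_const measurable_const
  have htint : ∀ i : Fin (m+1), Integrable (fun V : Fin (m+1) → ℝ =>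
      ψp (V i) * ∏ j, (if V j ≤ V i then (1:ℝ) else 0)) π := by
    intro i
    refine Integrable.mono (integrable_const C) (htmeas i).aestronglyMeasurable ?_
    filter_upwards [hbox] with V hV
    rw [Real.norm_eq_abs, Real.norm_eq_abs, abs_of_nonneg hC0]
    rw [abs_mul]
    have h1 : |∏ j, (if V j ≤ V i then (1:ℝ) else 0)| ≤ 1 := by
      rw [Finset.prod_boole]
      split <;> simp
    have h2 := hCψp _ (hV i)
    nlinarith [abs_nonneg (ψp (V i)), abs_nonneg (∏ j, (if V j ≤ V i then (1:ℝ) else 0))]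
  -- main chain
  have step1 : ∫ V, (∑ i, x V i * ψ (V i)) ∂π ≤
      ∫ V, (∑ i, ψp (V i) * ∏ j, (if V j ≤ V i then (1:ℝ) else 0)) ∂π := by
    apply integral_mono_ae hLint (integrable_finset_sum _ fun i _ => htint i)
    filter_upwards [hbox] with V hV
    exact hpt V hV
  have step2 : ∫ V, (∑ i, ψp (V i) * ∏ j, (if V j ≤ V i then (1:ℝ) else 0)) ∂π =
      (m+1 : ℝ) * ∫ v, ψp v * (μ (Set.Iic v)).toReal ^ m ∂μ := by
    rw [integral_finset_sum _ fun i _ => htint i]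
    have heach : ∀ i : Fin (m+1),
        ∫ V, ψp (V i) * ∏ j, (if V j ≤ V i then (1:ℝ) else 0) ∂π =
          ∫ v, ψp v * (μ (Set.Iic v)).toReal ^ m ∂μ := by
      intro i
      exact fubini_term μ ψp hψpmeas C
        (by filter_upwards [hμae] with v hv; exact hCψp v hv) i
    rw [Finset.sum_congr rfl fun i _ => heach i]
    simp [Finset.sum_const, nsmul_eq_mul]
  -- compute the μ-integral
  have hFnn : ∀ v ∈ Set.Icc a b, 0 ≤ F v := by
    intro w hw
    rcases eq_or_lt_of_le hw.1 with h | h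
    · simp [← h, hFa]
    · have := hFmono (Set.left_mem_Icc.2 hab.le) hw h
      rw [hFa] at this; linarith
  have hIicR : ∀ v ∈ Set.Icc a b, (μ (Set.Iic v)).toReal = F v := by
    intro v hv
    rw [hIic v hv, ENNReal.toReal_ofReal (hFnn v hv)]
  have step3 : ∫ v, ψp v * (μ (Set.Iic v)).toReal ^ m ∂μ =
      ∫ v in Set.Icc a b, ψp v * F v ^ m * f v := by
    have hfeq : ∫ v, ψp v * (μ (Set.Iic v)).toReal ^ m ∂μ = ∫ v, ψp v * F v ^ m ∂μ := by
      apply integral_congr_ae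
      filter_upwards [hμae] with v hv
      rw [hIicR v hv]
    rw [hfeq]
    have hd : (fun v => ENNReal.ofReal (f v)) = fun v => ((f v).toNNReal : ℝ≥0∞) := rfl
    rw [hμ, hd, integral_withDensity_eq_integral_smul hfmeas.real_toNNReal]
    apply setIntegral_congr_fun measurableSet_Icc
    intro v hv
    show (f v).toNNReal • (ψp v * F v ^ m) = ψp v * F v ^ m * f v
    rw [NNReal.smul_def, Real.coe_toNNReal _ (hfpos v hv).le, smul_eq_mul]
    ring
  have hprodcont : ContinuousOn (fun v => ψp v * F v ^ m * f v) (Set.Icc a b) := by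
    exact ((hψcont.sup continuousOn_const).mul ((hFcont.continuousOn).pow _)).mul hfcont
  have hii1 : IntervalIntegrable (fun v => ψp v * F v ^ m * f v) volume a r := by
    apply ContinuousOn.intervalIntegrable
    apply hprodcont.mono
    rw [Set.uIcc_of_le hrIcc.1]
    exact Set.Icc_subset_Icc le_rfl hrIcc.2
  have hii2 : IntervalIntegrable (fun v => ψp v * F v ^ m * f v) volume r b := by
    apply ContinuousOn.intervalIntegrable
    apply hprodcont.mono
    rw [Set.uIcc_of_le hrIcc.2]
    exact Set.Icc_subset_Icc hrIcc.1 le_rfl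
  have step4 : ∫ v in Set.Icc a b, ψp v * F v ^ m * f v =
      ∫ v in r..b, ψ v * F v ^ m * f v := by
    have e1 : ∫ v in Set.Icc a b, ψp v * F v ^ m * f v =
        ∫ v in a..b, ψp v * F v ^ m * f v := by
      rw [intervalIntegral.integral_of_le hab.le, integral_Icc_eq_integral_Ioc]
    have e2 : ∫ v in a..r, ψp v * F v ^ m * f v = 0 := by
      rw [intervalIntegral.integral_of_le hrIcc.1, integral_Ioc_eq_integral_Ioo]
      apply setIntegral_eq_zero_of_forall_eq_zero
      intro v hv
      have hvIcc : v ∈ Set.Icc a b := ⟨hv.1.le, le_trans hv.2.le hrIcc.2⟩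
      have hvnS : v ∉ S := by
        rw [hSeq]
        intro hc
        exact absurd hc.1 (not_le.2 hv.2)
      have : ¬ 0 ≤ ψ v := fun hc => hvnS ⟨hvIcc, hc⟩
      have h5 : ψp v = 0 := max_eq_right (not_le.1 this).le
      simp only [h5, zero_mul]
    have e3 : ∫ v in r..b, ψp v * F v ^ m * f v = ∫ v in r..b, ψ v * F v ^ m * f v := by
      apply intervalIntegral.integral_congr
      intro v hv
      rw [Set.uIcc_of_le hrIcc.2] at hv
      have hvS : v ∈ S := by rw [hSeq]; exact hv
      have h5 : ψp v = ψ v := max_eq_left hvS.2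
      simp only [h5]
    rw [e1, ← intervalIntegral.integral_add_adjacent_intervals hii1 hii2, e2, zero_add, e3]
  calc ∫ V, (∑ i, x V i * ψ (V i)) ∂π
      ≤ (m+1 : ℝ) * ∫ v, ψp v * (μ (Set.Iic v)).toReal ^ m ∂μ := by
        rw [← step2]; exact step1
    _ = (m+1 : ℝ) * ∫ v in r..b, ψ v * F v ^ m * f v := by rw [step3, step4]
    _ = ((m+1 : ℕ) : ℝ) * ∫ v in r..b, ψ v * F v ^ m * f v := by norm_num
end

section
/- Suppose the distribution is regular, i.e., φ is nondecreasing on [a,b], and let r* ∈ [a,b] satisfy φ(r*) = 0. Then the highest-bid-wins all-pay auction with reserve value r* achieves expected maximum payment at least half the optimal auction revenue: n·∫_a^b b_{r*}(v)·F(v)^{n-1}·f(v) dv ≥ (1/2)·n·∫_a^b max(φ(v), 0)·F(v)^{n-1}·f(v) dv. (For regular i.i.d. distributions, a highest-bid-wins all-pay auction with an appropriate reserve achieves approximation ratio at most 2 against optimal procurement.) -/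
open MeasureTheory intervalIntegral

lemma H1_nonneg (n : ℕ) (hn : 2 ≤ n) (t : ℝ) (h0 : 0 ≤ t) (h1 : t ≤ 1) :
    0 ≤ 1 + (2*(n:ℝ)-1)*t^n - 2*(n:ℝ)*t^(2*n-1) := by
  have h2 : t^(2*n-1) ≤ t^n := pow_le_pow_of_le_one h0 h1 (by omega)
  have h3 : t^n ≤ 1 := pow_le_one₀ h0 h1
  have hN : (2:ℝ) ≤ (n:ℝ) := by exact_mod_cast hn
  nlinarith

lemma hhat_nonneg (n : ℕ) (hn : 2 ≤ n) (u : ℝ) (h0 : 0 ≤ u) (h1 : u ≤ 1) :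
    0 ≤ 1 + (2*(n:ℝ)-1)*((n:ℝ)-2)*u^(n-1) - (2*(n:ℝ)-1)*((n:ℝ)-1)*u^n
      + 2*((n:ℝ)-1)*u^(2*n-1) := by
  obtain ⟨m, rfl⟩ : ∃ m, n = m + 2 := ⟨n - 2, by omega⟩
  have e1 : m + 2 - 1 = m + 1 := by omega
  have e2 : 2*(m+2) - 1 = 2*m + 3 := by omega
  rw [e1, e2]
  have hu1 : (0:ℝ) ≤ 1 - u := by linarith
  have hA : 1 - u^(m+2) ≤ ((m:ℝ)+2)*(1-u) := by
    have h := one_add_mul_le_pow (a := u - 1) (by linarith) (m+2)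
    have h1p : (1:ℝ) + (u-1) = u := by ring
    rw [h1p] at h
    push_cast at h ⊢
    linarith
  have hB : ((m:ℝ)+1)*(1-u)*u^(m+1) ≤ 1 - u^(m+1) := by
    have hg : (1-u) * ∑ i ∈ Finset.range (m+1), u^i = 1 - u^(m+1) := by
      have := geom_sum_mul u (m+1)
      linear_combination -this
    have hsum : ((m:ℝ)+1) * u^(m+1) ≤ ∑ i ∈ Finset.range (m+1), u^i := by
      have : ∀ i ∈ Finset.range (m+1), u^(m+1) ≤ u^i := fun i hi =>
        pow_le_pow_of_le_one h0 h1 (by simp at hi; omega)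
      calc ((m:ℝ)+1) * u^(m+1) = (Finset.range (m+1)).card • u^(m+1) := by
            rw [Finset.card_range, nsmul_eq_mul]; push_cast; ring
        _ ≤ ∑ i ∈ Finset.range (m+1), u^i := Finset.card_nsmul_le_sum _ _ _ this
    calc ((m:ℝ)+1)*(1-u)*u^(m+1) = (1-u) * (((m:ℝ)+1) * u^(m+1)) := by ring
      _ ≤ (1-u) * ∑ i ∈ Finset.range (m+1), u^i :=
          mul_le_mul_of_nonneg_left hsum hu1
      _ = 1 - u^(m+1) := hg
  set N : ℝ := (m:ℝ) + 2 with hNdef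
  have hNcast : ((m+2 : ℕ) : ℝ) = N := by push_cast; ring
  rw [hNcast]
  have hkey : 1 + (2*N-1)*(N-2)*u^(m+1) - (2*N-1)*(N-1)*u^(m+2) + 2*(N-1)*u^(2*m+3)
      = (1 - u^(m+1)) + (N-1)*u^(m+1)*((2*N-1)*(1-u) - 2*(1-u^(m+2))) := by
    ring
  rw [hkey]
  have hnn : 0 ≤ (N-1)*u^(m+1) := by
    have hN1 : (0:ℝ) ≤ N - 1 := by rw [hNdef]; linarith [Nat.cast_nonneg (α := ℝ) m]
    exact mul_nonneg hN1 (pow_nonneg h0 _)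
  have hbr : -(1-u) ≤ (2*N-1)*(1-u) - 2*(1-u^(m+2)) := by
    have : 2*(1 - u^(m+2)) ≤ 2*(N*(1-u)) := by nlinarith [hA]
    nlinarith
  have hstep : (N-1)*u^(m+1)*(-(1-u)) ≤ (N-1)*u^(m+1)*((2*N-1)*(1-u) - 2*(1-u^(m+2))) :=
    mul_le_mul_of_nonneg_left hbr hnn
  have : (N-1)*u^(m+1)*(-(1-u)) = -(((m:ℝ)+1)*(1-u)*u^(m+1)) := by
    rw [hNdef]; ring
  nlinarith [hB, hstep]

/-- **For regular distributions, a reserve-price all-pay auction is a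
2-approximation to optimal procurement.**  `n ≥ 2` agents have values drawn
i.i.d. from a distribution with continuous, strictly increasing cdf `F`,
density `f` positive on the support `[a,b]`, `F a = 0`, `F b = 1`.  Suppose
the virtual value for revenue `φ(z) = z - (1 - F z)/(f z)` is nondecreasing on
`[a, b]` and `φ r* = 0` for some `r* ∈ [a,b]`.  Then the highest-bid-wins
all-pay auction with reserve value `r*`, whose equilibrium bid function is
`bid v = v * F v ^ (n-1) - ∫ z in r*..v, F z ^ (n-1)` for `v ≥ r*` and `0`
otherwise, achieves expected maximum payment at least half of the optimal
auction revenue `n * ∫ v in a..b, max (φ v) 0 * F v ^ (n-1) * f v`. -/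
theorem regular_reserve_allpay_two_approx
    (n : ℕ) (hn : 2 ≤ n) (a b : ℝ) (hab : a < b)
    (F f : ℝ → ℝ)
    (hFcont : Continuous F)
    (hFmono : StrictMonoOn F (Set.Icc a b))
    (hFa : F a = 0) (hFb : F b = 1)
    (hfpos : ∀ x ∈ Set.Icc a b, 0 < f x)
    (hderiv : ∀ x ∈ Set.Icc a b, HasDerivAt F (f x) x)
    (φ : ℝ → ℝ)
    (hφ : ∀ v, φ v = v - (1 - F v) / f v)
    (hreg : MonotoneOn φ (Set.Icc a b))
    (rstar : ℝ) (hrstar : rstar ∈ Set.Icc a b) (hmono_price : φ rstar = 0)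
    (bid : ℝ → ℝ)
    (hbid : ∀ v, bid v =
      if rstar ≤ v then v * F v ^ (n - 1) - ∫ z in rstar..v, F z ^ (n - 1)
      else 0) :
    (n : ℝ) * ∫ v in a..b, bid v * F v ^ (n - 1) * f v ≥
      (1 / 2) * ((n : ℝ) * ∫ v in a..b, max (φ v) 0 * F v ^ (n - 1) * f v) := by
  obtain ⟨har, hrb⟩ := hrstar
  have habIcc : rstar ∈ Set.Icc a b := ⟨har, hrb⟩
  have hFmono' := hFmono.monotoneOn
  have hF0 : ∀ v ∈ Set.Icc a b, 0 ≤ F v := fun v hv => by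
    have := hFmono' (Set.left_mem_Icc.mpr hab.le) hv hv.1
    rwa [hFa] at this
  have hF1 : ∀ v ∈ Set.Icc a b, F v ≤ 1 := fun v hv => by
    have := hFmono' hv (Set.right_mem_Icc.mpr hab.le) hv.2
    rwa [hFb] at this
  have hr0 : 0 ≤ rstar := by
    have h2 : rstar = (1 - F rstar) / f rstar := by
      have h := hφ rstar
      rw [hmono_price] at h
      linarith
    rw [h2]
    exact div_nonneg (by linarith [hF1 rstar habIcc]) (hfpos rstar habIcc).le
  have hφneg : ∀ v ∈ Set.Icc a rstar, φ v ≤ 0 := fun v hv => by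
    have := hreg ⟨hv.1, hv.2.trans hrb⟩ habIcc hv.2
    rwa [hmono_price] at this
  have hφpos : ∀ v ∈ Set.Icc rstar b, 0 ≤ φ v := fun v hv => by
    have := hreg habIcc ⟨har.trans hv.1, hv.2⟩ hv.1
    rwa [hmono_price] at this
  -- exponent arithmetic
  have hpow1 : ∀ y : ℝ, y^(n-2) * y^n = y^(2*n-2) := fun y => by
    rw [← pow_add]; congr 1; omega
  have hpow2 : ∀ y : ℝ, y^(n-1) * y^n = y^(2*n-1) := fun y => by
    rw [← pow_add]; congr 1; omega
  have hpow3 : ∀ y : ℝ, y^(n-1) * y = y^n := fun y => by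
    rw [← pow_succ]; congr 1; omega
  have hc1 : ((n-1:ℕ):ℝ) = (n:ℝ) - 1 := by
    rw [Nat.cast_sub (by omega), Nat.cast_one]
  have hc2 : ((2*n-1:ℕ):ℝ) = 2*(n:ℝ) - 1 := by
    rw [Nat.cast_sub (by omega)]; push_cast; ring
  have hN2 : (2:ℝ) ≤ (n:ℝ) := by exact_mod_cast hn
  have hc2pos : (0:ℝ) < ((2*n-1:ℕ):ℝ) := by rw [hc2]; linarith
  have hnpos : (0:ℝ) < (n:ℝ) := by linarith
  -- continuity
  have hGcont : Continuous (fun v : ℝ => F v ^ (n-1)) := hFcont.pow _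
  have hFncont : Continuous (fun v : ℝ => F v ^ n) := hFcont.pow _
  have hF3cont : Continuous (fun v : ℝ => F v ^ (2*n-1)) := hFcont.pow _
  -- bid basics
  have hbid_ge : ∀ v, rstar ≤ v → bid v = v * F v ^ (n-1) - ∫ z in rstar..v, F z ^ (n-1) :=
    fun v hv => by rw [hbid v, if_pos hv]
  have hbid_lt : ∀ v, v < rstar → bid v = 0 := fun v hv => by
    rw [hbid v, if_neg (not_le.mpr hv)]
  have hbidnn : ∀ v ∈ Set.Icc rstar b, 0 ≤ bid v := by
    intro v hv
    have hvab : v ∈ Set.Icc a b := ⟨har.trans hv.1, hv.2⟩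
    rw [hbid_ge v hv.1]
    have h1 : ∫ z in rstar..v, F z ^ (n-1) ≤ ∫ z in rstar..v, F v ^ (n-1) := by
      apply intervalIntegral.integral_mono_on hv.1 (hGcont.intervalIntegrable _ _)
        intervalIntegrable_const
      intro z hz
      have hzab : z ∈ Set.Icc a b := ⟨har.trans hz.1, hz.2.trans hv.2⟩
      exact pow_le_pow_left₀ (hF0 z hzab) (hFmono' hzab hvab hz.2) _
    rw [intervalIntegral.integral_const, smul_eq_mul] at h1
    have hGv : 0 ≤ F v ^ (n-1) := pow_nonneg (hF0 v hvab) _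
    nlinarith [mul_nonneg hr0 hGv, hv.1]
  have hprim : Continuous (fun v : ℝ => ∫ z in rstar..v, F z ^ (n-1)) :=
    intervalIntegral.continuous_primitive (fun x y => hGcont.intervalIntegrable x y) rstar
  have hbidcont : ContinuousOn bid (Set.Icc rstar b) := by
    apply ContinuousOn.congr (((continuous_id.mul hGcont).sub hprim).continuousOn)
    intro v hv
    exact hbid_ge v hv.1
  have hIooIcc : ∀ x ∈ Set.Ioo rstar b, x ∈ Set.Icc a b := fun x hx =>
    ⟨har.trans hx.1.le, hx.2.le⟩
  -- derivative bundles
  have hU1 : ∀ x ∈ Set.Ioo rstar b,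
      HasDerivAt (fun v => v * F v ^ n) (F x ^ n + x * ((n:ℝ) * F x ^ (n-1) * f x)) x := by
    intro x hx
    have h := (hasDerivAt_id x).mul ((hderiv x (hIooIcc x hx)).pow n)
    refine h.congr_deriv ?_
    simp only [Pi.pow_apply, id_eq]
    ring
  have hU2 : ∀ x ∈ Set.Ioo rstar b,
      HasDerivAt (fun v => v * F v ^ (2*n-1))
        (F x ^ (2*n-1) + x * (((2*n-1:ℕ):ℝ) * F x ^ (2*n-2) * f x)) x := by
    intro x hx
    have h := (hasDerivAt_id x).mul ((hderiv x (hIooIcc x hx)).pow (2*n-1))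
    have e : 2*n-1-1 = 2*n-2 := by omega
    rw [e] at h
    refine h.congr_deriv ?_
    simp only [Pi.pow_apply, id_eq]
    ring
  have hbd : ∀ x ∈ Set.Ioo rstar b,
      HasDerivAt bid (x * (((n-1:ℕ):ℝ) * F x ^ (n-2) * f x)) x := by
    intro x hx
    have hG : HasDerivAt (fun v => F v ^ (n-1)) (((n-1:ℕ):ℝ) * F x ^ (n-1-1) * f x) x :=
      (hderiv x (hIooIcc x hx)).pow (n-1)
    have e : n-1-1 = n-2 := by omega
    rw [e] at hG
    have hInt : HasDerivAt (fun v => ∫ z in rstar..v, F z ^ (n-1)) (F x ^ (n-1)) x :=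
      (hGcont.integral_hasStrictDerivAt rstar x).hasDerivAt
    have h := ((hasDerivAt_id x).mul hG).sub hInt
    have heq : bid =ᶠ[nhds x] fun v => v * F v ^ (n-1) - ∫ z in rstar..v, F z ^ (n-1) := by
      filter_upwards [IsOpen.mem_nhds isOpen_Ioi hx.1] with v hv
      exact hbid_ge v (le_of_lt hv)
    have h2 := h.congr_of_eventuallyEq heq
    refine h2.congr_deriv ?_
    simp only [id_eq]
    ring
  have hU3 : ∀ x ∈ Set.Ioo rstar b,
      HasDerivAt (fun v => bid v * F v ^ n)
        (x * (((n-1:ℕ):ℝ) * F x ^ (2*n-2) * f x) + bid x * ((n:ℝ) * F x ^ (n-1) * f x)) x := by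
    intro x hx
    have h := (hbd x hx).mul ((hderiv x (hIooIcc x hx)).pow n)
    refine h.congr_deriv ?_
    rw [← hpow1 (F x), Pi.pow_apply]
    ring
  -- integrability of the derivatives
  have hD1int : IntervalIntegrable
      (fun x => F x ^ n + x * ((n:ℝ) * F x ^ (n-1) * f x)) volume rstar b := by
    apply intervalIntegral.intervalIntegrable_deriv_of_nonneg
      ((continuous_id.mul hFncont).continuousOn)
    · intro x hx
      rw [min_eq_left hrb, max_eq_right hrb] at hx
      exact hU1 x hx
    · intro x hx
      rw [min_eq_left hrb, max_eq_right hrb] at hx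
      have h1 := hF0 x (hIooIcc x hx)
      have h2 := (hfpos x (hIooIcc x hx)).le
      have h3 : 0 ≤ x := hr0.trans hx.1.le
      exact add_nonneg (pow_nonneg h1 n)
        (mul_nonneg h3 (mul_nonneg (mul_nonneg (Nat.cast_nonneg n) (pow_nonneg h1 _)) h2))
  have hD2int : IntervalIntegrable
      (fun x => F x ^ (2*n-1) + x * (((2*n-1:ℕ):ℝ) * F x ^ (2*n-2) * f x)) volume rstar b := by
    apply intervalIntegral.intervalIntegrable_deriv_of_nonneg
      ((continuous_id.mul hF3cont).continuousOn)
    · intro x hx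
      rw [min_eq_left hrb, max_eq_right hrb] at hx
      exact hU2 x hx
    · intro x hx
      rw [min_eq_left hrb, max_eq_right hrb] at hx
      have h1 := hF0 x (hIooIcc x hx)
      have h2 := (hfpos x (hIooIcc x hx)).le
      have h3 : 0 ≤ x := hr0.trans hx.1.le
      exact add_nonneg (pow_nonneg h1 _)
        (mul_nonneg h3 (mul_nonneg (mul_nonneg (Nat.cast_nonneg _) (pow_nonneg h1 _)) h2))
  have hD3int : IntervalIntegrable
      (fun x => x * (((n-1:ℕ):ℝ) * F x ^ (2*n-2) * f x) + bid x * ((n:ℝ) * F x ^ (n-1) * f x))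
      volume rstar b := by
    apply intervalIntegral.intervalIntegrable_deriv_of_nonneg
      (g := fun v => bid v * F v ^ n)
    · rw [Set.uIcc_of_le hrb]
      exact hbidcont.mul hFncont.continuousOn
    · intro x hx
      rw [min_eq_left hrb, max_eq_right hrb] at hx
      exact hU3 x hx
    · intro x hx
      rw [min_eq_left hrb, max_eq_right hrb] at hx
      have h1 := hF0 x (hIooIcc x hx)
      have h2 := (hfpos x (hIooIcc x hx)).le
      have h3 : 0 ≤ x := hr0.trans hx.1.le
      have h4 := hbidnn x ⟨hx.1.le, hx.2.le⟩
      exact add_nonneg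
        (mul_nonneg h3 (mul_nonneg (mul_nonneg (Nat.cast_nonneg _) (pow_nonneg h1 _)) h2))
        (mul_nonneg h4 (mul_nonneg (mul_nonneg (Nat.cast_nonneg _) (pow_nonneg h1 _)) h2))
  -- FTC evaluations
  have hE1 : ∫ v in rstar..b, (F v ^ n + v * ((n:ℝ) * F v ^ (n-1) * f v))
      = b - rstar * F rstar ^ n := by
    have h := intervalIntegral.integral_eq_sub_of_hasDerivAt_of_le hrb
      ((continuous_id.mul hFncont).continuousOn) hU1 hD1int
    rw [h]
    simp only [Pi.mul_apply, id_eq, hFb, one_pow, mul_one]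
  have hE2 : ∫ v in rstar..b, (F v ^ (2*n-1) + v * (((2*n-1:ℕ):ℝ) * F v ^ (2*n-2) * f v))
      = b - rstar * F rstar ^ (2*n-1) := by
    have h := intervalIntegral.integral_eq_sub_of_hasDerivAt_of_le hrb
      ((continuous_id.mul hF3cont).continuousOn) hU2 hD2int
    rw [h]
    simp only [Pi.mul_apply, id_eq, hFb, one_pow, mul_one]
  have hE3 : ∫ v in rstar..b,
      (v * (((n-1:ℕ):ℝ) * F v ^ (2*n-2) * f v) + bid v * ((n:ℝ) * F v ^ (n-1) * f v))
      = (b - ∫ z in rstar..b, F z ^ (n-1)) - rstar * F rstar ^ (2*n-1) := by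
    have h := intervalIntegral.integral_eq_sub_of_hasDerivAt_of_le hrb
      (hbidcont.mul hFncont.continuousOn) hU3 hD3int
    rw [h]
    simp only [Pi.mul_apply]
    rw [hbid_ge b hrb, hbid_ge rstar le_rfl, intervalIntegral.integral_same, hFb, one_pow,
      mul_one, sub_zero, ← hpow2 (F rstar)]
    ring
  -- integrable components
  have hK1int : IntervalIntegrable (fun v => v * (F v ^ (n-1) * f v)) volume rstar b := by
    have h := ((hD1int.sub (hFncont.intervalIntegrable rstar b)).const_mul ((n:ℝ))⁻¹)
    have heq : (fun v => ((n:ℝ))⁻¹ * ((F v ^ n + v * ((n:ℝ) * F v ^ (n-1) * f v)) - F v ^ n))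
        = fun v => v * (F v ^ (n-1) * f v) := by
      funext v
      field_simp
      ring
    rwa [heq] at h
  have hK2int : IntervalIntegrable (fun v => v * (F v ^ (2*n-2) * f v)) volume rstar b := by
    have h := ((hD2int.sub (hF3cont.intervalIntegrable rstar b)).const_mul (((2*n-1:ℕ):ℝ))⁻¹)
    have heq : (fun v => (((2*n-1:ℕ):ℝ))⁻¹ *
        ((F v ^ (2*n-1) + v * (((2*n-1:ℕ):ℝ) * F v ^ (2*n-2) * f v)) - F v ^ (2*n-1)))
        = fun v => v * (F v ^ (2*n-2) * f v) := by
      funext v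
      rw [add_sub_cancel_left, show v * (((2*n-1:ℕ):ℝ) * F v ^ (2*n-2) * f v)
          = ((2*n-1:ℕ):ℝ) * (v * (F v ^ (2*n-2) * f v)) from by ring,
        inv_mul_cancel_left₀ hc2pos.ne']
    rwa [heq] at h
  have hI3int : IntervalIntegrable (fun v => bid v * F v ^ (n-1) * f v) volume rstar b := by
    have h := ((hD3int.sub (hK2int.const_mul ((n-1:ℕ):ℝ))).const_mul ((n:ℝ))⁻¹)
    have heq : (fun v => ((n:ℝ))⁻¹ *
        ((v * (((n-1:ℕ):ℝ) * F v ^ (2*n-2) * f v) + bid v * ((n:ℝ) * F v ^ (n-1) * f v))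
          - ((n-1:ℕ):ℝ) * (v * (F v ^ (2*n-2) * f v))))
        = fun v => bid v * F v ^ (n-1) * f v := by
      funext v
      field_simp
      ring
    rwa [heq] at h
  -- integral identities
  have hK1 : (n:ℝ) * (∫ v in rstar..b, v * (F v ^ (n-1) * f v))
      = b - rstar * F rstar ^ n - ∫ v in rstar..b, F v ^ n := by
    have hsplit : ∫ v in rstar..b, (F v ^ n + v * ((n:ℝ) * F v ^ (n-1) * f v))
        = (∫ v in rstar..b, F v ^ n) + (n:ℝ) * ∫ v in rstar..b, v * (F v ^ (n-1) * f v) := by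
      rw [← intervalIntegral.integral_const_mul,
        ← intervalIntegral.integral_add (hFncont.intervalIntegrable _ _)
          (hK1int.const_mul _)]
      apply intervalIntegral.integral_congr
      intro v _
      simp only
      ring
    rw [hE1] at hsplit
    linarith
  have hK2 : (2*(n:ℝ)-1) * (∫ v in rstar..b, v * (F v ^ (2*n-2) * f v))
      = b - rstar * F rstar ^ (2*n-1) - ∫ v in rstar..b, F v ^ (2*n-1) := by
    have hsplit : ∫ v in rstar..b, (F v ^ (2*n-1) + v * (((2*n-1:ℕ):ℝ) * F v ^ (2*n-2) * f v))
        = (∫ v in rstar..b, F v ^ (2*n-1))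
          + ((2*n-1:ℕ):ℝ) * ∫ v in rstar..b, v * (F v ^ (2*n-2) * f v) := by
      rw [← intervalIntegral.integral_const_mul,
        ← intervalIntegral.integral_add (hF3cont.intervalIntegrable _ _)
          (hK2int.const_mul _)]
      apply intervalIntegral.integral_congr
      intro v _
      simp only
      ring
    rw [hE2, hc2] at hsplit
    linarith
  have hI3 : (n:ℝ) * (∫ v in rstar..b, bid v * F v ^ (n-1) * f v)
      = (b - ∫ z in rstar..b, F z ^ (n-1)) - rstar * F rstar ^ (2*n-1)
        - ((n:ℝ)-1) * ∫ v in rstar..b, v * (F v ^ (2*n-2) * f v) := by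
    have hsplit : ∫ v in rstar..b,
        (v * (((n-1:ℕ):ℝ) * F v ^ (2*n-2) * f v) + bid v * ((n:ℝ) * F v ^ (n-1) * f v))
        = ((n-1:ℕ):ℝ) * (∫ v in rstar..b, v * (F v ^ (2*n-2) * f v))
          + (n:ℝ) * ∫ v in rstar..b, bid v * F v ^ (n-1) * f v := by
      rw [← intervalIntegral.integral_const_mul, ← intervalIntegral.integral_const_mul,
        ← intervalIntegral.integral_add (hK2int.const_mul _) (hI3int.const_mul _)]
      apply intervalIntegral.integral_congr
      intro v _
      simp only
      ring
    rw [hE3, hc1] at hsplit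
    linarith
  have hptIR : ∀ v ∈ Set.Icc rstar b, max (φ v) 0 * F v ^ (n-1) * f v
      = v * (F v ^ (n-1) * f v) - (F v ^ (n-1) - F v ^ n) := by
    intro v hv
    have hvab : v ∈ Set.Icc a b := ⟨har.trans hv.1, hv.2⟩
    have hfv := hfpos v hvab
    rw [max_eq_left (hφpos v hv), hφ v]
    have key : (v - (1 - F v) / f v) * F v ^ (n-1) * f v
        = v * (F v ^ (n-1) * f v) - (F v ^ (n-1) - F v ^ (n-1) * F v) := by
      field_simp
    rw [key, hpow3 (F v)]
  -- rewrite the optimal-revenue integrand on [rstar, b]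
  have hIR : ∫ v in rstar..b, max (φ v) 0 * F v ^ (n-1) * f v
      = (∫ v in rstar..b, v * (F v ^ (n-1) * f v))
        - ((∫ v in rstar..b, F v ^ (n-1)) - ∫ v in rstar..b, F v ^ n) := by
    rw [← intervalIntegral.integral_sub (hGcont.intervalIntegrable _ _)
      (hFncont.intervalIntegrable _ _),
      ← intervalIntegral.integral_sub hK1int
      ((hGcont.intervalIntegrable _ _).sub (hFncont.intervalIntegrable _ _))]
    apply intervalIntegral.integral_congr
    intro v hv
    rw [Set.uIcc_of_le hrb] at hv
    exact hptIR v hv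
  -- the integrals over [a, rstar] vanish
  have hRzero_eq : Set.EqOn (fun v => max (φ v) 0 * F v ^ (n-1) * f v) (fun _ => (0:ℝ))
      (Set.Icc a rstar) := by
    intro v hv
    simp only
    rw [max_eq_right (hφneg v hv), zero_mul, zero_mul]
  have hRzero : ∫ v in a..rstar, max (φ v) 0 * F v ^ (n-1) * f v = 0 := by
    rw [intervalIntegral.integral_congr (g := fun _ => (0:ℝ))
      (by rwa [Set.uIcc_of_le har])]
    simp
  have hRzeroInt : IntervalIntegrable (fun v => max (φ v) 0 * F v ^ (n-1) * f v)
      volume a rstar := by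
    rw [intervalIntegrable_iff_integrableOn_Ioc_of_le har]
    exact (integrableOn_zero (s := Set.Ioc a rstar)).congr_fun
      (fun v hv => (hRzero_eq (Set.Ioc_subset_Icc_self hv)).symm) measurableSet_Ioc
  have hLae : (fun v => bid v * F v ^ (n-1) * f v)
      =ᵐ[volume.restrict (Set.Ioc a rstar)] (fun _ => (0:ℝ)) := by
    rw [Filter.EventuallyEq, ae_restrict_iff' measurableSet_Ioc]
    have h0 : ∀ᵐ (v:ℝ), v ≠ rstar := by
      rw [ae_iff]
      convert Real.volume_singleton (a := rstar) using 2
      ext v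
      simp
    filter_upwards [h0] with v hv hvm
    rw [hbid_lt v (lt_of_le_of_ne hvm.2 hv), zero_mul, zero_mul]
  have hLzero : ∫ v in a..rstar, bid v * F v ^ (n-1) * f v = 0 := by
    rw [intervalIntegral.integral_of_le har, MeasureTheory.integral_congr_ae hLae]
    simp
  have hLzeroInt : IntervalIntegrable (fun v => bid v * F v ^ (n-1) * f v)
      volume a rstar := by
    rw [intervalIntegrable_iff_integrableOn_Ioc_of_le har]
    exact (integrableOn_zero (s := Set.Ioc a rstar)).congr hLae.symm
  -- integrability of the optimal-revenue integrand on [rstar, b]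
  have hIRint : IntervalIntegrable (fun v => max (φ v) 0 * F v ^ (n-1) * f v)
      volume rstar b := by
    have h := hK1int.sub ((hGcont.intervalIntegrable rstar b).sub
      (hFncont.intervalIntegrable rstar b))
    rw [intervalIntegrable_iff_integrableOn_Ioc_of_le hrb] at h ⊢
    apply h.congr_fun _ measurableSet_Ioc
    intro v hv
    exact (hptIR v (Set.Ioc_subset_Icc_self hv)).symm
  -- split the integrals over [a, b]
  have hLsplit : ∫ v in a..b, bid v * F v ^ (n-1) * f v
      = ∫ v in rstar..b, bid v * F v ^ (n-1) * f v := by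
    rw [← intervalIntegral.integral_add_adjacent_intervals hLzeroInt hI3int, hLzero, zero_add]
  have hRsplit : ∫ v in a..b, max (φ v) 0 * F v ^ (n-1) * f v
      = ∫ v in rstar..b, max (φ v) 0 * F v ^ (n-1) * f v := by
    rw [← intervalIntegral.integral_add_adjacent_intervals hRzeroInt hIRint, hRzero, zero_add]
  -- the two inequality inputs
  have hJh : 0 ≤ (b - rstar)
      + (2*(n:ℝ)-1)*((n:ℝ)-2) * (∫ v in rstar..b, F v ^ (n-1))
      - (2*(n:ℝ)-1)*((n:ℝ)-1) * (∫ v in rstar..b, F v ^ n)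
      + 2*((n:ℝ)-1) * (∫ v in rstar..b, F v ^ (2*n-1)) := by
    have hptw : ∀ u ∈ Set.Icc rstar b,
        0 ≤ 1 + (2*(n:ℝ)-1)*((n:ℝ)-2)*F u^(n-1) - (2*(n:ℝ)-1)*((n:ℝ)-1)*F u^n
          + 2*((n:ℝ)-1)*F u^(2*n-1) := by
      intro u hu
      have huab : u ∈ Set.Icc a b := ⟨har.trans hu.1, hu.2⟩
      exact hhat_nonneg n hn (F u) (hF0 u huab) (hF1 u huab)
    have h := intervalIntegral.integral_nonneg (μ := volume) hrb hptw
    have heq : ∫ u in rstar..b,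
        (1 + (2*(n:ℝ)-1)*((n:ℝ)-2)*F u^(n-1) - (2*(n:ℝ)-1)*((n:ℝ)-1)*F u^n
          + 2*((n:ℝ)-1)*F u^(2*n-1))
        = (b - rstar)
          + (2*(n:ℝ)-1)*((n:ℝ)-2) * (∫ v in rstar..b, F v ^ (n-1))
          - (2*(n:ℝ)-1)*((n:ℝ)-1) * (∫ v in rstar..b, F v ^ n)
          + 2*((n:ℝ)-1) * (∫ v in rstar..b, F v ^ (2*n-1)) := by
      rw [intervalIntegral.integral_add (((_root_.intervalIntegrable_const).add
            ((hGcont.intervalIntegrable rstar b).const_mul _)).sub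
            ((hFncont.intervalIntegrable rstar b).const_mul _))
          ((hF3cont.intervalIntegrable rstar b).const_mul _),
        intervalIntegral.integral_sub ((_root_.intervalIntegrable_const).add
            ((hGcont.intervalIntegrable rstar b).const_mul _))
          ((hFncont.intervalIntegrable rstar b).const_mul _),
        intervalIntegral.integral_add (_root_.intervalIntegrable_const)
          ((hGcont.intervalIntegrable rstar b).const_mul _),
        intervalIntegral.integral_const_mul, intervalIntegral.integral_const_mul,
        intervalIntegral.integral_const_mul, intervalIntegral.integral_const, smul_eq_mul,
        mul_one]
    rw [heq] at h
    exact h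
  have hHr : 0 ≤ rstar * (1 + (2*(n:ℝ)-1)*(F rstar)^n - 2*(n:ℝ)*(F rstar)^(2*n-1)) :=
    mul_nonneg hr0 (H1_nonneg n hn (F rstar) (hF0 rstar habIcc) (hF1 rstar habIcc))
  -- final assembly
  rw [ge_iff_le, hLsplit, hRsplit, hIR, ← sub_nonneg]
  have hkey : 2*(2*(n:ℝ)-1) * ((n:ℝ) * (∫ v in rstar..b, bid v * F v ^ (n-1) * f v)
      - 1/2 * ((n:ℝ) * ((∫ v in rstar..b, v * (F v ^ (n-1) * f v))
        - ((∫ v in rstar..b, F v ^ (n-1)) - ∫ v in rstar..b, F v ^ n))))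
      = (((b - rstar)
          + (2*(n:ℝ)-1)*((n:ℝ)-2) * (∫ v in rstar..b, F v ^ (n-1))
          - (2*(n:ℝ)-1)*((n:ℝ)-1) * (∫ v in rstar..b, F v ^ n)
          + 2*((n:ℝ)-1) * (∫ v in rstar..b, F v ^ (2*n-1)))
        + rstar * (1 + (2*(n:ℝ)-1)*(F rstar)^n - 2*(n:ℝ)*(F rstar)^(2*n-1))) := by
    linear_combination (2*(2*(n:ℝ)-1)) * hI3 - (2*(n:ℝ)-1) * hK1 - (2*((n:ℝ)-1)) * hK2
  have h1 : 0 ≤ 2*(2*(n:ℝ)-1) * ((n:ℝ) * (∫ v in rstar..b, bid v * F v ^ (n-1) * f v)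
      - 1/2 * ((n:ℝ) * ((∫ v in rstar..b, v * (F v ^ (n-1) * f v))
        - ((∫ v in rstar..b, F v ^ (n-1)) - ∫ v in rstar..b, F v ^ n)))) := by
    rw [hkey]
    exact add_nonneg hJh hHr
  have hpos : (0:ℝ) < 2*(2*(n:ℝ)-1) := by linarith
  exact (mul_nonneg_iff_of_pos_left hpos).mp h1
end

section
/- For the uniform distribution on [0,1] (F(v) = v, f(v) = 1) and n ≥ 2 agents, the highest-bid-wins all-pay auction with no reserve has equilibrium bid function b_0(v) = v·F(v)^{n-1} − ∫_0^v F(z)^{n-1} dz = ((n−1)/n)·v^n; its expected revenue is n·∫_0^1 b_0(v) dv = (n−1)/(n+1) and its expected maximum payment is n·∫_0^1 b_0(v)·v^{n-1} dv = (n−1)/(2n); hence the ratio of expected revenue to expected maximum payment equals 2n/(n+1), which tends to 2 as n → ∞ (so the utilization-ratio bound of 2 is tight). -/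
open MeasureTheory intervalIntegral Filter

/-- **Tightness of the utilization-ratio bound for the uniform distribution.**
For uniform `[0,1]` values (`F v = v`, `f v = 1`) and `n ≥ 2` agents, the
highest-bid-wins all-pay auction with no reserve has equilibrium bid function
`b₀ v = v * v^(n-1) - ∫ z in 0..v, z^(n-1) = ((n-1)/n) * v^n`; its expected
revenue is `(n-1)/(n+1)`, its expected maximum payment is `(n-1)/(2n)`, their
ratio is `2n/(n+1)`, which tends to `2` as `n → ∞`. -/
theorem uniform_utilization_tight
    (n : ℕ) (hn : 2 ≤ n) :
    (∀ v ∈ Set.Icc (0:ℝ) 1,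
        v * v ^ (n - 1) - (∫ z in (0:ℝ)..v, z ^ (n - 1)) =
          (((n:ℝ) - 1) / n) * v ^ n) ∧
    ((n:ℝ) * ∫ v in (0:ℝ)..1, (((n:ℝ) - 1) / n) * v ^ n) =
        ((n:ℝ) - 1) / ((n:ℝ) + 1) ∧
    ((n:ℝ) * ∫ v in (0:ℝ)..1, ((((n:ℝ) - 1) / n) * v ^ n) * v ^ (n - 1)) =
        ((n:ℝ) - 1) / (2 * (n:ℝ)) ∧
    (((n:ℝ) - 1) / ((n:ℝ) + 1)) / (((n:ℝ) - 1) / (2 * (n:ℝ))) =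
        2 * (n:ℝ) / ((n:ℝ) + 1) ∧
    Tendsto (fun m : ℕ => 2 * (m:ℝ) / ((m:ℝ) + 1)) atTop (nhds 2) := by
  have hn0 : (n:ℝ) ≠ 0 := by positivity
  have hne : n ≠ 0 := by omega
  have hsub : n - 1 + 1 = n := by omega
  refine ⟨?_, ?_, ?_, ?_, ?_⟩
  · intro v _
    rw [integral_pow]
    have h1 : v ^ (n - 1 + 1) = v ^ n := by rw [hsub]
    have h2 : v * v ^ (n - 1) = v ^ n := by
      conv_rhs => rw [← hsub]
      ring
    have h3 : ((n:ℝ) - 1 + 1) = n := by ring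
    rw [h1, h2]
    push_cast [hsub]
    field_simp
    rw [zero_pow hne, Nat.cast_sub (by omega)]; push_cast; ring
  · rw [intervalIntegral.integral_const_mul, integral_pow]
    push_cast
    have : ((n:ℝ) + 1) ≠ 0 := by positivity
    field_simp
    ring
  · have hexp : ∀ v : ℝ, ((((n:ℝ) - 1) / n) * v ^ n) * v ^ (n - 1)
        = (((n:ℝ) - 1) / n) * v ^ (n + (n-1)) := by
      intro v; rw [pow_add]; ring
    simp_rw [hexp]
    rw [intervalIntegral.integral_const_mul, integral_pow]
    have h4 : (n + (n-1) : ℕ) = 2*n - 1 := by omega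
    have h5 : ((n + (n-1) : ℕ) : ℝ) + 1 = 2 * n := by
      have : ((n - 1 : ℕ) : ℝ) = (n:ℝ) - 1 := by
        have : (1:ℕ) ≤ n := by omega
        push_cast [this]; ring
      push_cast [this]; ring
    rw [h5]
    have : (2:ℝ) * n ≠ 0 := by positivity
    simp only [one_pow]
    rw [zero_pow (by omega)]
    field_simp
    ring
  · have h1 : ((n:ℝ) - 1) ≠ 0 := by
      have : (2:ℝ) ≤ n := by exact_mod_cast hn
      linarith
    have h2 : ((n:ℝ) + 1) ≠ 0 := by positivity
    field_simp
  · have h := (tendsto_natCast_div_add_atTop (1:ℝ)).const_mul 2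
    simpa [mul_div_assoc] using h
end

section
/- For the uniform distribution on [0,1] and n ≥ 2 agents, the virtual value for maximum payment is ψ_n(z) = z^n·(1 + 1/n) − 1/n, which is strictly increasing on [0,1] with unique zero at (n+1)^{−1/n}, and the optimal all-pay auction (highest-bid-wins with reserve value (n+1)^{−1/n}) achieves expected maximum payment n·∫_{(n+1)^{−1/n}}^1 ψ_n(v)·v^{n-1} dv = n/(2(n+1)), which tends to 1/2 as n → ∞. -/
open MeasureTheory intervalIntegral Filter

/-- **The optimal all-pay auction for uniform values.**  For uniform `[0,1]`
values and `n ≥ 2` agents, the virtual value for maximum payment is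
`ψ_n z = z^n * (1 + 1/n) - 1/n`, which is strictly increasing on `[0,1]` with
unique zero at `(n+1)^(-1/n)`; the optimal all-pay auction (highest-bid-wins
with reserve value `(n+1)^(-1/n)`) achieves expected maximum payment
`n * ∫ v in (n+1)^(-1/n)..1, ψ_n v * v^(n-1) = n / (2(n+1))`, which tends to
`1/2` as `n → ∞`. -/
theorem uniform_optimal_allpay
    (n : ℕ) (hn : 2 ≤ n) (r : ℝ)
    (hrdef : r = ((n : ℝ) + 1) ^ (-(1 : ℝ) / (n : ℝ))) :
    (∀ z ∈ Set.Icc (0:ℝ) 1,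
        z * z ^ (n - 1) - (1 - z ^ n) / (n : ℝ) =
          z ^ n * (1 + 1 / (n:ℝ)) - 1 / (n:ℝ)) ∧
    StrictMonoOn (fun z : ℝ => z ^ n * (1 + 1 / (n:ℝ)) - 1 / (n:ℝ))
        (Set.Icc (0:ℝ) 1) ∧
    (r ^ n * (1 + 1 / (n:ℝ)) - 1 / (n:ℝ) = 0 ∧
      ∀ z ∈ Set.Icc (0:ℝ) 1,
        z ^ n * (1 + 1 / (n:ℝ)) - 1 / (n:ℝ) = 0 → z = r) ∧
    ((n:ℝ) * ∫ v in r..1, (v ^ n * (1 + 1 / (n:ℝ)) - 1 / (n:ℝ)) * v ^ (n - 1))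
        = (n:ℝ) / (2 * ((n:ℝ) + 1)) ∧
    Tendsto (fun m : ℕ => (m:ℝ) / (2 * ((m:ℝ) + 1))) atTop (nhds (1/2)) := by
  have hn0 : (n:ℝ) ≠ 0 := by positivity
  have hn1 : (n:ℝ) + 1 ≠ 0 := by positivity
  have hne : n ≠ 0 := by omega
  have hpow : ∀ z : ℝ, z * z ^ (n - 1) = z ^ n := by
    intro z
    rw [← pow_succ']
    congr 1
    omega
  -- r ^ n = 1 / (n + 1)
  have hrn : r ^ n = 1 / ((n:ℝ) + 1) := by
    rw [hrdef, ← Real.rpow_natCast _ n, ← Real.rpow_mul (by positivity)]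
    rw [show (-(1:ℝ) / (n:ℝ)) * (n:ℝ) = -1 by field_simp]
    rw [Real.rpow_neg_one]
    rw [one_div]
  have hr0 : 0 ≤ r := by
    rw [hrdef]; positivity
  refine ⟨?_, ?_, ⟨?_, ?_⟩, ?_, ?_⟩
  · intro z _
    rw [hpow z]
    field_simp
    ring
  · intro a ha b hb hab
    have h1 : a ^ n < b ^ n := pow_lt_pow_left₀ hab ha.1 hne
    have h2 : (0:ℝ) < 1 + 1 / (n:ℝ) := by positivity
    simp only
    nlinarith
  · rw [hrn]; field_simp; ring
  · intro z hz hz0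
    have hzn : z ^ n = r ^ n := by
      rw [hrn]
      have h2 : (0:ℝ) < 1 + 1 / (n:ℝ) := by positivity
      field_simp at hz0 ⊢
      nlinarith
    exact (pow_left_strictMonoOn₀ hne).injOn hz.1 hr0 hzn
  · have hsplit : ∀ v : ℝ, (v ^ n * (1 + 1 / (n:ℝ)) - 1 / (n:ℝ)) * v ^ (n - 1)
        = (1 + 1 / (n:ℝ)) * v ^ (2 * n - 1) - (1 / (n:ℝ)) * v ^ (n - 1) := by
      intro v
      rw [show 2 * n - 1 = n + (n - 1) by omega, pow_add]
      ring
    simp_rw [hsplit]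
    rw [intervalIntegral.integral_sub
        (((by fun_prop : Continuous fun v : ℝ => (1 + 1 / (n:ℝ)) * v ^ (2 * n - 1)).intervalIntegrable _ _))
        (((by fun_prop : Continuous fun v : ℝ => 1 / (n:ℝ) * v ^ (n - 1)).intervalIntegrable _ _)),
      intervalIntegral.integral_const_mul, intervalIntegral.integral_const_mul,
      integral_pow, integral_pow]
    rw [show 2 * n - 1 + 1 = n * 2 by omega, show n - 1 + 1 = n by omega]
    rw [show r ^ (n * 2) = (r ^ n) ^ 2 from pow_mul r n 2, hrn]
    push_cast [show n * 2 = 2 * n by omega]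
    simp only [Nat.cast_sub (by omega : 1 ≤ n), Nat.cast_sub (by omega : 1 ≤ n * 2), Nat.cast_sub (by omega : 1 ≤ 2 * n), Nat.cast_mul, Nat.cast_ofNat, Nat.cast_one]
    field_simp
    ring_nf
    rw [show (n:ℝ) ^ 2 * (n:ℝ)⁻¹ = n by field_simp]
    ring
  · have h := tendsto_natCast_div_add_atTop (𝕜 := ℝ) 1
    have h2 := h.div_const 2
    have heq : (fun m : ℕ => (m:ℝ) / (2 * ((m:ℝ) + 1)))
        = fun m : ℕ => ((m:ℝ) / ((m:ℝ) + 1)) / 2 := by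
      funext m
      rw [div_div, mul_comm]
    rw [heq]
    exact h2
end

section
/- For the exponential distribution with cdf F(v) = 1 − e^{−v} and density f(v) = e^{−v} on [0,∞) and n = 2 agents, the virtual value for maximum payment equals ψ_2(z) = (z − 1) + e^{−z}·(1/2 − z), and ψ_2 is not monotone nondecreasing on [0,∞): there exist 0 ≤ z_1 < z_2 with ψ_2(z_1) > ψ_2(z_2). (Thus the exponential distribution, though regular with respect to revenue, is not regular with respect to maximum payment.) -/
open Real

/-- **The exponential distribution is not regular with respect to maximum
payment for two agents.**  For the exponential distribution with cdf
`F v = 1 - exp (-v)` and density `f v = exp (-v)` on `[0, ∞)` and `n = 2`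
agents, the virtual value for maximum payment
`ψ₂ z = z * F z - (1 - F z ^ 2) / (2 * f z)` equals
`(z - 1) + exp (-z) * (1/2 - z)`, and `ψ₂` is not monotone nondecreasing on
`[0, ∞)`: there exist `0 ≤ z₁ < z₂` with `ψ₂ z₁ > ψ₂ z₂`. -/
theorem exponential_not_regular_for_max_payment :
    (∀ z : ℝ, 0 ≤ z →
      z * (1 - exp (-z)) ^ (2 - 1) -
          (1 - (1 - exp (-z)) ^ 2) / (2 * exp (-z)) =
        (z - 1) + exp (-z) * (1 / 2 - z)) ∧
    ∃ z₁ z₂ : ℝ, 0 ≤ z₁ ∧ z₁ < z₂ ∧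
      (z₁ - 1) + exp (-z₁) * (1 / 2 - z₁) >
        (z₂ - 1) + exp (-z₂) * (1 / 2 - z₂) := by
  constructor
  · intro z _
    have h : exp (-z) ≠ 0 := (exp_pos _).ne'
    field_simp
    ring
  · refine ⟨0, 1/4, le_refl 0, by norm_num, ?_⟩
    have h1 : exp (-(1/4 : ℝ)) < 1 := exp_lt_one_iff.mpr (by norm_num)
    have h2 : (0:ℝ) < exp (-(1/4 : ℝ)) := exp_pos _
    simp only [neg_zero, exp_zero]
    nlinarith
end

section
/- For all integers n, k with 2 ≤ k ≤ n, one has C(n−1, k−1) · ∫_0^1 (1−v)^{k−1} · v^{2n−k−1} dv < 1/(2n−1); equivalently, C(n−1, k−1) · (k−1)! · (2n−k−1)! · (2n−1) < (2n−1)!. (This is the strict positivity of H_n(0) in the proof that winner-take-all is the optimal static contest.) -/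
open MeasureTheory intervalIntegral

lemma fact_mul_prod (b : ℕ) : ∀ a : ℕ,
    b.factorial * ∏ j ∈ Finset.range a, (b + 1 + j) = (b + a).factorial := by
  intro a
  induction a with
  | zero => simp
  | succ a ih =>
      rw [Finset.prod_range_succ, ← mul_assoc, ih]
      rw [show b + (a + 1) = (b + a) + 1 by ring, Nat.factorial_succ]
      ring

lemma beta_nat (a b : ℕ) :
    ∫ v in (0:ℝ)..1, (1 - v) ^ a * v ^ b
      = (a.factorial * b.factorial : ℝ) / (a + b + 1).factorial := by
  have hu : 0 < Complex.re ((b : ℂ) + 1) := by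
    simp [Complex.add_re]; positivity
  have h := Complex.betaIntegral_eval_nat_add_one_right hu a
  rw [Complex.betaIntegral] at h
  have hint : (∫ x in (0:ℝ)..1, (x : ℂ) ^ ((b : ℂ) + 1 - 1) * ((1 : ℂ) - x) ^ ((a : ℂ) + 1 - 1))
      = ((∫ v in (0:ℝ)..1, (1 - v) ^ a * v ^ b : ℝ) : ℂ) := by
    rw [← intervalIntegral.integral_ofReal]
    apply intervalIntegral.integral_congr
    intro x _
    simp only [add_sub_cancel_right, Complex.cpow_natCast]
    push_cast
    ring
  rw [hint] at h
  have hprod : (∏ j ∈ Finset.range (a + 1), ((b : ℂ) + 1 + j))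
      = ((a + b + 1).factorial / b.factorial : ℝ) := by
    have hmn := fact_mul_prod b (a + 1)
    have hb : (b.factorial : ℂ) ≠ 0 := by exact_mod_cast b.factorial_ne_zero
    field_simp
    push_cast
    rw [eq_div_iff hb]
    have : ((b.factorial : ℂ)) * ∏ j ∈ Finset.range (a + 1), ((b : ℂ) + 1 + j)
        = ((b + (a + 1)).factorial : ℂ) := by
      exact_mod_cast congrArg (Nat.cast : ℕ → ℂ) hmn
    rw [mul_comm] at this
    rw [this]
    norm_cast
    ring_nf
  rw [hprod] at h
  have h2 := congrArg Complex.re h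
  rw [Complex.ofReal_re] at h2
  rw [h2]
  have : ((a.factorial : ℂ)) / (((a + b + 1).factorial / b.factorial : ℝ) : ℂ)
      = (((a.factorial * b.factorial : ℝ) / (a + b + 1).factorial : ℝ) : ℂ) := by
    have hb : (b.factorial : ℝ) ≠ 0 := by exact_mod_cast b.factorial_ne_zero
    have hab : ((a + b + 1).factorial : ℝ) ≠ 0 := by exact_mod_cast (a + b + 1).factorial_ne_zero
    push_cast
    field_simp
  rw [this, Complex.ofReal_re]

lemma choose_strict_top {m M s : ℕ} (h1 : s + 1 ≤ m) (h2 : m < M) :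
    m.choose (s + 1) < M.choose (s + 1) :=
  calc m.choose (s + 1) < m.choose s + m.choose (s + 1) := by
        have := Nat.choose_pos (show s ≤ m by omega); omega
    _ = (m + 1).choose (s + 1) := (Nat.choose_succ_succ m s).symm
    _ ≤ M.choose (s + 1) := Nat.choose_le_choose _ h2

/-- **Strict positivity of `H_n(0)`** in the proof that winner-take-all is the
optimal static contest: for all integers `n, k` with `2 ≤ k ≤ n`,
`C(n-1, k-1) * ∫ v in 0..1, (1-v)^(k-1) * v^(2n-k-1) < 1/(2n-1)`;
equivalently, `C(n-1, k-1) * (k-1)! * (2n-k-1)! * (2n-1) < (2n-1)!`. -/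
theorem choose_beta_integral_lt
    (n k : ℕ) (hk : 2 ≤ k) (hkn : k ≤ n) :
    ((n - 1).choose (k - 1) : ℝ) *
        (∫ v in (0:ℝ)..1, (1 - v) ^ (k - 1) * v ^ (2 * n - k - 1)) <
      1 / (2 * (n:ℝ) - 1) ∧
    (n - 1).choose (k - 1) * Nat.factorial (k - 1) * Nat.factorial (2 * n - k - 1) * (2 * n - 1) <
      Nat.factorial (2 * n - 1) := by
  have hkey : (n - 1).choose (k - 1) * Nat.factorial (k - 1) * Nat.factorial (2 * n - k - 1)
      * (2 * n - 1) < Nat.factorial (2 * n - 1) := by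
    have hc : (n - 1).choose (k - 1) < (2 * n - 2).choose (k - 1) := by
      obtain ⟨s, hs⟩ : ∃ s, k - 1 = s + 1 := ⟨k - 2, by omega⟩
      rw [hs]
      exact choose_strict_top (by omega) (by omega)
    have heq : (2 * n - 2).choose (k - 1) * Nat.factorial (k - 1)
        * Nat.factorial (2 * n - k - 1) = Nat.factorial (2 * n - 2) := by
      have := Nat.choose_mul_factorial_mul_factorial
        (show k - 1 ≤ 2 * n - 2 by omega)
      rwa [show 2 * n - 2 - (k - 1) = 2 * n - k - 1 by omega] at this
    have hfac : Nat.factorial (2 * n - 1) = (2 * n - 1) * Nat.factorial (2 * n - 2) := by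
      rw [show 2 * n - 1 = (2 * n - 2) + 1 by omega, Nat.factorial_succ]
    rw [hfac, ← heq]
    have hpos : 0 < Nat.factorial (k - 1) * Nat.factorial (2 * n - k - 1) * (2 * n - 1) :=
      Nat.mul_pos (Nat.mul_pos (k - 1).factorial_pos (2 * n - k - 1).factorial_pos) (by omega)
    calc (n - 1).choose (k - 1) * Nat.factorial (k - 1) * Nat.factorial (2 * n - k - 1)
          * (2 * n - 1)
        = (n - 1).choose (k - 1)
            * (Nat.factorial (k - 1) * Nat.factorial (2 * n - k - 1) * (2 * n - 1)) := by ring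
      _ < (2 * n - 2).choose (k - 1)
            * (Nat.factorial (k - 1) * Nat.factorial (2 * n - k - 1) * (2 * n - 1)) :=
          (Nat.mul_lt_mul_right hpos).mpr hc
      _ = (2 * n - 1) * ((2 * n - 2).choose (k - 1) * Nat.factorial (k - 1)
            * Nat.factorial (2 * n - k - 1)) := by ring
  refine ⟨?_, hkey⟩
  rw [beta_nat]
  have hsum : (k - 1) + (2 * n - k - 1) + 1 = 2 * n - 1 := by omega
  rw [hsum]
  have h1 : (0:ℝ) < 2 * (n:ℝ) - 1 := by
    have : (2:ℝ) ≤ n := by exact_mod_cast le_trans hk hkn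
    linarith
  have h2 : (0:ℝ) < ((2 * n - 1).factorial : ℝ) := by
    exact_mod_cast (2 * n - 1).factorial_pos
  have hform : ((n - 1).choose (k - 1) : ℝ) *
      ((Nat.factorial (k - 1) : ℝ) * (Nat.factorial (2 * n - k - 1) : ℝ)
        / (Nat.factorial (2 * n - 1) : ℝ))
    = (((n - 1).choose (k - 1) : ℝ) * (Nat.factorial (k - 1) : ℝ)
        * (Nat.factorial (2 * n - k - 1) : ℝ)) / (Nat.factorial (2 * n - 1) : ℝ) := by
    ring
  rw [hform, div_lt_div_iff₀ h2 h1, one_mul]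
  have hn2 : (2 * (n:ℝ) - 1) = ((2 * n - 1 : ℕ) : ℝ) := by
    have h1n : 1 ≤ 2 * n := by omega
    push_cast [h1n]
    ring
  rw [hn2]
  exact_mod_cast hkey
end

section
/- For all integers n, k with 2 ≤ k ≤ n and every x ∈ (0,1], the quantity H_{n,k}(x) = ∫_x^1 u^{n−k−1} · [ C(n−1, k−1)·(n−k+1)·( ∫_u^1 (1−v)^{k−2}·v^{n−1} dv )·( u − (n−k)/(n−k+1) ) + n·( ∫_u^1 v^{n−2} dv )·u^k ] du is nonnegative. (This is the key inequality in the proof that the winner-take-all division of the reward is the optimal static all-pay contest.) -/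
open MeasureTheory intervalIntegral

private lemma ftc_right {h : ℝ → ℝ} (hc : Continuous h) (u : ℝ) :
    HasDerivAt (fun t => ∫ v in t..1, h v) (-(h u)) u := by
  have heq : (fun t : ℝ => ∫ v in t..1, h v) = fun t => -(∫ v in (1:ℝ)..t, h v) := by
    funext t; rw [intervalIntegral.integral_symm]
  rw [heq]
  exact (intervalIntegral.integral_hasDerivAt_right
    (Continuous.intervalIntegrable hc 1 u) (Continuous.stronglyMeasurableAtFilter hc _ _)
    hc.continuousAt).neg

private lemma key_binom (k' a : ℕ) {u : ℝ} (hu0 : 0 ≤ u) (hu1 : u ≤ 1) :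
    ((k' + a + 1).choose (k' + 1) : ℝ) * ((1 - u) ^ (k' + 1) * u ^ a)
      ≤ 1 - u ^ (k' + a + 1) := by
  have h1 : (0:ℝ) ≤ 1 - u := by linarith
  have hbin : ∑ j ∈ Finset.range (k' + a + 1 + 1),
      (1 - u) ^ j * u ^ (k' + a + 1 - j) * ((k' + a + 1).choose j : ℝ) = (1:ℝ) := by
    have h2 := add_pow (1 - u) u (k' + a + 1)
    simpa using h2.symm
  have hsub : ({0, k' + 1} : Finset ℕ) ⊆ Finset.range (k' + a + 1 + 1) := by
    intro j hj
    simp only [Finset.mem_insert, Finset.mem_singleton] at hj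
    rcases hj with rfl | rfl <;> simp only [Finset.mem_range] <;> omega
  have hle : ∑ j ∈ ({0, k' + 1} : Finset ℕ),
      (1 - u) ^ j * u ^ (k' + a + 1 - j) * ((k' + a + 1).choose j : ℝ)
      ≤ ∑ j ∈ Finset.range (k' + a + 1 + 1),
      (1 - u) ^ j * u ^ (k' + a + 1 - j) * ((k' + a + 1).choose j : ℝ) := by
    apply Finset.sum_le_sum_of_subset_of_nonneg hsub
    intro i _ _
    positivity
  rw [Finset.sum_pair (by omega : (0:ℕ) ≠ k' + 1)] at hle
  have e1 : k' + a + 1 - 0 = k' + a + 1 := by omega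
  have e2 : k' + a + 1 - (k' + 1) = a := by omega
  rw [e1, e2] at hle
  simp only [pow_zero, one_mul, Nat.choose_zero_right, Nat.cast_one, mul_one] at hle
  rw [hbin] at hle
  nlinarith [hle]

/-- **The key inequality in the proof that winner-take-all is the optimal
static all-pay contest**: for all integers `n, k` with `2 ≤ k ≤ n` and every
`x ∈ (0, 1]`, the quantity
`H_{n,k}(x) = ∫ u in x..1, u^(n-k-1) * (C(n-1,k-1) * (n-k+1) *
  (∫ v in u..1, (1-v)^(k-2) * v^(n-1)) * (u - (n-k)/(n-k+1))
  + n * (∫ v in u..1, v^(n-2)) * u^k)` is nonnegative. -/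
theorem H_nonneg
    (n k : ℕ) (hk : 2 ≤ k) (hkn : k ≤ n)
    (x : ℝ) (hx : x ∈ Set.Ioc (0:ℝ) 1) :
    0 ≤ ∫ u in x..1, u ^ ((n:ℤ) - (k:ℤ) - 1) *
        (((n - 1).choose (k - 1) : ℝ) * ((n:ℝ) - (k:ℝ) + 1) *
            (∫ v in u..1, (1 - v) ^ (k - 2) * v ^ (n - 1)) *
            (u - ((n:ℝ) - (k:ℝ)) / ((n:ℝ) - (k:ℝ) + 1)) +
          (n:ℝ) * (∫ v in u..1, v ^ (n - 2)) * u ^ k) := by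
  obtain ⟨hx0, hx1⟩ := hx
  obtain ⟨k', rfl⟩ : ∃ k', k = k' + 2 := ⟨k - 2, by omega⟩
  obtain ⟨a, rfl⟩ : ∃ a, n = k' + 2 + a := ⟨n - (k' + 2), by omega⟩
  have e1 : k' + 2 - 2 = k' := by omega
  have e2 : k' + 2 - 1 = k' + 1 := by omega
  have e3 : k' + 2 + a - 1 = k' + a + 1 := by omega
  have e4 : k' + 2 + a - 2 = k' + a := by omega
  simp only [e1, e2, e3, e4]
  -- abbreviations (no `set` on the goal; we use explicit terms)
  have hC0 : (0:ℝ) ≤ ((k' + a + 1).choose (k' + 1) : ℝ) := by positivity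
  have hhc : Continuous (fun v : ℝ => (1 - v) ^ k' * v ^ (k' + a + 1)) := by fun_prop
  set I : ℝ → ℝ := fun t => ∫ v in t..1, (1 - v) ^ k' * v ^ (k' + a + 1) with hIdef
  have hId : ∀ u : ℝ, HasDerivAt I (-((1 - u) ^ k' * u ^ (k' + a + 1))) u := ftc_right hhc
  have hIc : Continuous I := by
    rw [continuous_iff_continuousAt]; exact fun u => (hId u).continuousAt
  set g : ℝ → ℝ := fun u => ((k' + a + 1).choose (k' + 1) : ℝ) *
      ((u ^ (a + 1) - u ^ a) * I u) with hgdef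
  set G : ℝ → ℝ := fun u => ((k' + a + 1).choose (k' + 1) : ℝ) *
      (((((a:ℝ) + 1) * u ^ a - (a:ℝ) * u ^ (a - 1)) * I u
      + (u ^ (a + 1) - u ^ a) * (-((1 - u) ^ k' * u ^ (k' + a + 1))))) with hGdef
  have hgd : ∀ u : ℝ, HasDerivAt g (G u) u := by
    intro u
    have h1 := (((hasDerivAt_pow (a + 1) u).sub (hasDerivAt_pow a u)).mul
      (hId u)).const_mul (((k' + a + 1).choose (k' + 1) : ℝ))
    simp only [Nat.add_sub_cancel, Nat.cast_add, Nat.cast_one] at h1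
    exact h1
  set φ : ℝ → ℝ := fun u => u ^ (k' + a + 1) *
      (((k' + 2 + a : ℕ) : ℝ) * ((1 - u ^ (k' + a + 1)) / ((k' + a : ℕ) + 1 : ℝ))
        - ((k' + a + 1).choose (k' + 1) : ℝ) * ((1 - u) ^ (k' + 1) * u ^ a)) with hφdef
  have hφc : Continuous φ := by fun_prop
  have hGc : Continuous G := by fun_prop
  -- pointwise identity
  have key : Set.EqOn (fun u : ℝ => u ^ (((k' + 2 + a : ℕ) : ℤ) - ((k' + 2 : ℕ) : ℤ) - 1) *
        (((k' + a + 1).choose (k' + 1) : ℝ) * (((k' + 2 + a : ℕ) : ℝ) - ((k' + 2 : ℕ) : ℝ) + 1) *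
            (∫ v in u..1, (1 - v) ^ k' * v ^ (k' + a + 1)) *
            (u - (((k' + 2 + a : ℕ) : ℝ) - ((k' + 2 : ℕ) : ℝ)) /
              (((k' + 2 + a : ℕ) : ℝ) - ((k' + 2 : ℕ) : ℝ) + 1)) +
          ((k' + 2 + a : ℕ) : ℝ) * (∫ v in u..1, v ^ (k' + a)) * u ^ (k' + 2)))
      (fun u => G u + φ u) (Set.uIcc x 1) := by
    intro u hu
    rw [Set.uIcc_of_le hx1] at hu
    have hu0 : (0:ℝ) < u := lt_of_lt_of_le hx0 hu.1
    have ez : ((k' + 2 + a : ℕ) : ℤ) - ((k' + 2 : ℕ) : ℤ) - 1 = (a:ℤ) - 1 := by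
      push_cast; ring
    simp only [hGdef, hφdef, integral_pow, ez, zpow_sub_one₀ (ne_of_gt hu0), zpow_natCast]
    have hIval : (∫ v in u..1, (1 - v) ^ k' * v ^ (k' + a + 1)) = I u := rfl
    rw [hIval]
    push_cast
    rcases a with _ | a'
    · simp only [pow_zero, Nat.cast_zero]
      field_simp
      ring
    · simp only [Nat.add_sub_cancel]
      push_cast
      have hne : ((k':ℝ) + 2 + ((a':ℝ) + 1) - ((k':ℝ) + 2) + 1) ≠ 0 := by
        ring_nf; positivity
      field_simp
      ring
  rw [intervalIntegral.integral_congr key,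
    intervalIntegral.integral_add (Continuous.intervalIntegrable hGc x 1)
      (Continuous.intervalIntegrable hφc x 1),
    intervalIntegral.integral_eq_sub_of_hasDerivAt (fun u _ => hgd u)
      (Continuous.intervalIntegrable hGc x 1)]
  have hg1 : g 1 = 0 := by simp [hgdef]
  have hIx : 0 ≤ I x := by
    apply intervalIntegral.integral_nonneg hx1
    intro v hv
    have h1 : (0:ℝ) ≤ 1 - v := by linarith [hv.2]
    have h2 : (0:ℝ) ≤ v := le_trans hx0.le hv.1
    positivity
  have hgx : g x ≤ 0 := by
    have hxx : x ^ (a + 1) ≤ x ^ a := by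
      calc x ^ (a + 1) = x ^ a * x := pow_succ x a
      _ ≤ x ^ a * 1 := by
          exact mul_le_mul_of_nonneg_left hx1 (pow_nonneg hx0.le a)
      _ = x ^ a := mul_one _
    have h1 : x ^ (a + 1) - x ^ a ≤ 0 := by linarith
    exact mul_nonpos_of_nonneg_of_nonpos hC0
      (mul_nonpos_of_nonpos_of_nonneg h1 hIx)
  have hφint : 0 ≤ ∫ u in x..1, φ u := by
    apply intervalIntegral.integral_nonneg hx1
    intro u hu
    have hu0 : (0:ℝ) ≤ u := le_trans hx0.le hu.1
    have hu1 : u ≤ 1 := hu.2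
    have hX : (0:ℝ) ≤ 1 - u ^ (k' + a + 1) := by
      have := pow_le_one₀ hu0 hu1 (n := k' + a + 1)
      linarith
    have hkb := key_binom k' a hu0 hu1
    have hd : (0:ℝ) < (k' + a : ℕ) + 1 := by positivity
    have h2 : (1 - u ^ (k' + a + 1)) ≤
        ((k' + 2 + a : ℕ) : ℝ) * ((1 - u ^ (k' + a + 1)) / ((k' + a : ℕ) + 1 : ℝ)) := by
      rw [mul_div_assoc', le_div_iff₀ hd]
      have hcast : ((k' + a : ℕ) : ℝ) + 1 ≤ ((k' + 2 + a : ℕ) : ℝ) := by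
        push_cast; linarith
      nlinarith
    apply mul_nonneg (pow_nonneg hu0 _)
    linarith
  linarith
end
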